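/- arXiv:1710.06133 — 9 statements merged into one kernel-verified Lean document; each statement's English description precedes it below -/
import Mathlib

section
/- A positively homogeneous function p : ℝⁿ → ℝ is upper semicontinuous on ℝⁿ if and only if there exists a nonempty family Φ of real-valued sublinear functions on ℝⁿ such that p(x) = inf_{φ∈Φ} φ(x) for all x ∈ ℝⁿ. -/
open scoped RealInnerProductSpace

lemma usc_bddAbove_aux {X : Type*} [TopologicalSpace X] {f : X → ℝ}
    (hf : UpperSemicontinuous f) {K : Set X} (hK : IsCompact K) :
    ∃ C, ∀ x ∈ K, f x ≤ C := by
  have hU : ∀ x ∈ K, {z | f z < f x + 1} ∈ nhds x := fun x _ => hf x (f x + 1) (lt_add_one _)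
  obtain ⟨t, -, ht⟩ := hK.elim_nhds_subcover (fun x => {z | f z < f x + 1}) hU
  obtain ⟨C, hC⟩ := (t.image fun x => f x + 1).bddAbove
  refine ⟨C, fun z hz => ?_⟩
  obtain ⟨x, hxt, hx⟩ := Set.mem_iUnion₂.1 (ht hz)
  exact le_trans (le_of_lt hx) (hC (Finset.mem_coe.2 (Finset.mem_image_of_mem _ hxt)))

lemma convexOn_aux {E : Type*} [NormedAddCommGroup E] [InnerProductSpace ℝ E]
    (C B : ℝ) (hC : 0 ≤ C) (u : E) :
    ConvexOn ℝ Set.univ (fun x => C * ‖x‖ + B * ⟪x, u⟫) := by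
  have h1 : ConvexOn ℝ Set.univ (fun x : E => C * ‖x‖) := by
    simpa [smul_eq_mul] using convexOn_univ_norm.smul (c := C) hC
  refine h1.add ⟨convex_univ, fun x _ y _ a b _ _ _ => le_of_eq ?_⟩
  simp [inner_add_left, real_inner_smul_left]
  ring

theorem stmt_8 {n : ℕ} (p : EuclideanSpace ℝ (Fin n) → ℝ)
    (hph : ∀ (x : EuclideanSpace ℝ (Fin n)) (l : ℝ), 0 < l → p (l • x) = l * p x) :
    UpperSemicontinuous p ↔
      ∃ Φ : Set (EuclideanSpace ℝ (Fin n) → ℝ), Φ.Nonempty ∧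
        (∀ φ ∈ Φ, (∀ (x : EuclideanSpace ℝ (Fin n)) (l : ℝ), 0 < l → φ (l • x) = l * φ x)
          ∧ ConvexOn ℝ Set.univ φ) ∧
        (∀ x : EuclideanSpace ℝ (Fin n), BddBelow (Set.range fun φ : Φ => φ.1 x)) ∧
        (∀ x, p x = ⨅ φ : Φ, φ.1 x) := by
  have hp0 : p 0 = 0 := by
    have h := hph 0 2 two_pos
    rw [smul_zero] at h
    linarith
  have hunit : ∀ x : EuclideanSpace ℝ (Fin n), x ≠ 0 → ‖(‖x‖⁻¹ • x : EuclideanSpace ℝ (Fin n))‖ = 1 := by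
    intro x hx
    have hn : (0:ℝ) < ‖x‖ := norm_pos_iff.2 hx
    rw [norm_smul, norm_inv, norm_norm, inv_mul_cancel₀ hn.ne']
  constructor
  · intro husc
    obtain ⟨M₀, hM₀⟩ := usc_bddAbove_aux husc (isCompact_sphere (0 : EuclideanSpace ℝ (Fin n)) 1)
    set M := max M₀ 0 with hMdef
    have hM0 : 0 ≤ M := le_max_right _ _
    have hM : ∀ x : EuclideanSpace ℝ (Fin n), p x ≤ M * ‖x‖ := by
      intro x
      rcases eq_or_ne x 0 with rfl | hx
      · simp [hp0]
      · have hn : (0:ℝ) < ‖x‖ := norm_pos_iff.2 hx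
        have hsm : p x = ‖x‖ * p (‖x‖⁻¹ • x) := by
          have h := hph (‖x‖⁻¹ • x) ‖x‖ hn
          rwa [smul_inv_smul₀ hn.ne'] at h
        have h1 : p (‖x‖⁻¹ • x) ≤ M₀ :=
          hM₀ _ (by simp [mem_sphere_iff_norm, hunit x hx])
        calc p x = ‖x‖ * p (‖x‖⁻¹ • x) := hsm
          _ ≤ ‖x‖ * M := mul_le_mul_of_nonneg_left (h1.trans (le_max_left _ _)) hn.le
          _ = M * ‖x‖ := mul_comm _ _
    set Φ : Set (EuclideanSpace ℝ (Fin n) → ℝ) :=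
      {φ | (∀ (x : EuclideanSpace ℝ (Fin n)) (l : ℝ), 0 < l → φ (l • x) = l * φ x)
        ∧ ConvexOn ℝ Set.univ φ ∧ ∀ x, p x ≤ φ x} with hΦdef
    have hφ₀ : (fun x : EuclideanSpace ℝ (Fin n) => M * ‖x‖ + 0 * ⟪x, (0:EuclideanSpace ℝ (Fin n))⟫) ∈ Φ := by
      refine ⟨fun x l hl => ?_, convexOn_aux M 0 hM0 0, fun x => ?_⟩
      · simp only [norm_smul, Real.norm_eq_abs, abs_of_pos hl, real_inner_smul_left]
        ring
      · simpa using hM x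
    have key : ∀ x₀ : EuclideanSpace ℝ (Fin n), x₀ ≠ 0 → ∀ ε : ℝ, 0 < ε →
        ∃ φ ∈ Φ, φ x₀ ≤ p x₀ + ε := by
      intro x₀ hx₀ ε hε
      have hn : (0:ℝ) < ‖x₀‖ := norm_pos_iff.2 hx₀
      set u : EuclideanSpace ℝ (Fin n) := ‖x₀‖⁻¹ • x₀ with hu_def
      have hu : ‖u‖ = 1 := hunit x₀ hx₀
      have hx₀u : ‖x₀‖ • u = x₀ := smul_inv_smul₀ hn.ne' x₀
      set A : ℝ := p u + ε / ‖x₀‖ with hAdef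
      have hAu : p u < A := lt_add_of_pos_right _ (div_pos hε hn)
      obtain ⟨δ, hδpos, hδ⟩ := Metric.eventually_nhds_iff.1 (husc u A hAu)
      have hδ2 : (0:ℝ) < δ ^ 2 := by positivity
      set C : ℝ := max A ((2 * (M + |A|)) / δ ^ 2) with hCdef
      have hC0 : 0 ≤ C := le_trans (by positivity) (le_max_right _ _)
      have hCA : A ≤ C := le_max_left _ _
      have hC2 : 2 * (M + |A|) ≤ C * δ ^ 2 := by
        rw [← div_le_iff₀ hδ2]
        exact le_max_right _ _
      set φ : EuclideanSpace ℝ (Fin n) → ℝ := fun x => C * ‖x‖ + (A - C) * ⟪x, u⟫ with hφdef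
      have hφhom : ∀ (x : EuclideanSpace ℝ (Fin n)) (l : ℝ), 0 < l → φ (l • x) = l * φ x := by
        intro x l hl
        simp only [hφdef, norm_smul, Real.norm_eq_abs, abs_of_pos hl, real_inner_smul_left]
        ring
      have hφmaj : ∀ x, p x ≤ φ x := by
        intro x
        rcases eq_or_ne x 0 with rfl | hx
        · simp [hφdef, hp0]
        · have hr : (0:ℝ) < ‖x‖ := norm_pos_iff.2 hx
          set z : EuclideanSpace ℝ (Fin n) := ‖x‖⁻¹ • x with hz_def
          have hz : ‖z‖ = 1 := hunit x hx
          have hxz : ‖x‖ • z = x := smul_inv_smul₀ hr.ne' x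
          have hpz : p x = ‖x‖ * p z := by
            conv_lhs => rw [← hxz]
            rw [hph z ‖x‖ hr]
          have hφz : φ x = ‖x‖ * φ z := by
            conv_lhs => rw [← hxz]
            rw [hφhom z ‖x‖ hr]
          rw [hpz, hφz]
          refine mul_le_mul_of_nonneg_left ?_ hr.le
          set t : ℝ := ⟪z, u⟫ with ht_def
          have habs : |t| ≤ 1 := by
            have h := abs_real_inner_le_norm z u
            rwa [hz, hu, one_mul] at h
          have ht1 : t ≤ 1 := (abs_le.1 habs).2
          have htm : -1 ≤ t := (abs_le.1 habs).1
          have hnsq : ‖z - u‖ ^ 2 = 2 - 2 * t := by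
            have h := @norm_sub_sq_real (EuclideanSpace ℝ (Fin n)) _ _ z u
            rw [hz, hu, ← ht_def] at h
            linarith [h]
          have hφzval : φ z = C * (1 - t) + A * t := by
            simp only [hφdef, hz, ← ht_def]
            ring
          rw [hφzval]
          by_cases hcase : dist z u < δ
          · have hpzA : p z < A := hδ hcase
            have e := mul_nonneg (sub_nonneg.2 hCA) (sub_nonneg.2 ht1)
            linarith
          · have hdge : δ ≤ ‖z - u‖ := by
              rw [dist_eq_norm] at hcase
              exact not_lt.1 hcase
            have h1t : δ ^ 2 / 2 ≤ 1 - t := by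
              have hsq : δ ^ 2 ≤ ‖z - u‖ ^ 2 := pow_le_pow_left₀ hδpos.le hdge 2
              linarith
            have hpzM : p z ≤ M := by
              have h := hM z
              rwa [hz, mul_one] at h
            have e1 : C * (δ ^ 2 / 2) ≤ C * (1 - t) := mul_le_mul_of_nonneg_left h1t hC0
            have e2 : -|A| ≤ A * t := by
              have h1 : |A * t| ≤ |A| := by
                rw [abs_mul]
                calc |A| * |t| ≤ |A| * 1 := mul_le_mul_of_nonneg_left habs (abs_nonneg A)
                  _ = |A| := mul_one _
              linarith [neg_abs_le (A * t)]
            have e3 : 2 * (M + |A|) ≤ 2 * (C * (1 - t)) := by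
              calc 2 * (M + |A|) ≤ C * δ ^ 2 := hC2
                _ ≤ C * (2 * (1 - t)) := mul_le_mul_of_nonneg_left (by linarith) hC0
                _ = 2 * (C * (1 - t)) := by ring
            linarith
      have hφval : φ x₀ = p x₀ + ε := by
        have hinner : ⟪x₀, u⟫ = ‖x₀‖ := by
          rw [hu_def, real_inner_smul_right, real_inner_self_eq_norm_sq]
          field_simp
        have hpx₀ : p x₀ = ‖x₀‖ * p u := by
          conv_lhs => rw [← hx₀u]
          rw [hph u ‖x₀‖ hn]
        have hval : φ x₀ = A * ‖x₀‖ := by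
          simp only [hφdef, hinner]
          ring
        rw [hval, hAdef, hpx₀]
        field_simp
      exact ⟨φ, ⟨hφhom, convexOn_aux C (A - C) hC0 u, hφmaj⟩, le_of_eq hφval⟩
    have hbdd : ∀ x : EuclideanSpace ℝ (Fin n), BddBelow (Set.range fun φ : Φ => φ.1 x) := by
      intro x
      refine ⟨p x, ?_⟩
      rintro v ⟨φ, rfl⟩
      exact φ.2.2.2 x
    haveI hΦne : Nonempty Φ := ⟨⟨_, hφ₀⟩⟩
    refine ⟨Φ, ⟨_, hφ₀⟩, fun φ hφ => ⟨hφ.1, hφ.2.1⟩, hbdd, fun x => ?_⟩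
    refine le_antisymm (le_ciInf fun φ => φ.2.2.2 x) ?_
    rcases eq_or_ne x 0 with rfl | hx
    · refine le_trans (ciInf_le (hbdd 0) ⟨_, hφ₀⟩) ?_
      simp [hp0]
    · refine le_of_forall_pos_le_add ?_
      intro ε hε
      obtain ⟨φ, hφΦ, hφle⟩ := key x hx ε hε
      exact le_trans (ciInf_le (hbdd x) ⟨φ, hφΦ⟩) hφle
  · rintro ⟨Φ, hne, hsub, hbdd, hinf⟩
    haveI : Nonempty Φ := hne.to_subtype
    intro x y hxy
    rw [hinf x] at hxy
    obtain ⟨φ, hφ⟩ := exists_lt_of_ciInf_lt hxy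
    have hcont : Continuous φ.1 := (hsub φ.1 φ.2).2.locallyLipschitz.continuous
    have hev : ∀ᶠ z in nhds x, φ.1 z < y :=
      (isOpen_lt hcont continuous_const).mem_nhds hφ
    filter_upwards [hev] with z hz
    rw [hinf z]
    exact lt_of_le_of_lt (ciInf_le (hbdd z) φ) hz
end

section
/- A positively homogeneous function p : ℝⁿ → ℝ is lower semicontinuous on ℝⁿ if and only if there exists a nonempty family Ψ of real-valued superlinear functions on ℝⁿ such that p(x) = sup_{ψ∈Ψ} ψ(x) for all x ∈ ℝⁿ. -/
open Set Metric

variable {n : ℕ}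

private lemma homog_zero {p : EuclideanSpace ℝ (Fin n) → ℝ}
    (hph : ∀ (x : EuclideanSpace ℝ (Fin n)) (l : ℝ), 0 < l → p (l • x) = l * p x) :
    p 0 = 0 := by
  have := hph 0 2 (by norm_num)
  simp at this
  linarith

private lemma exists_lower_bound {p : EuclideanSpace ℝ (Fin n) → ℝ}
    (hph : ∀ (x : EuclideanSpace ℝ (Fin n)) (l : ℝ), 0 < l → p (l • x) = l * p x)
    (hlsc : LowerSemicontinuous p) :
    ∃ m : ℝ, m ≤ 0 ∧ ∀ x, m * ‖x‖ ≤ p x := by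
  obtain ⟨k, hk⟩ : ∃ k : ℕ, sphere (0 : EuclideanSpace ℝ (Fin n)) 1 ⊆ p ⁻¹' Ioi (-(k : ℝ)) := by
    apply (isCompact_sphere (0 : EuclideanSpace ℝ (Fin n)) 1).elim_directed_cover
      (fun k : ℕ => p ⁻¹' Ioi (-(k : ℝ))) (fun k => hlsc.isOpen_preimage _)
    · intro y _
      obtain ⟨k, hk⟩ := exists_nat_gt (-(p y))
      exact mem_iUnion.2 ⟨k, by simp only [mem_preimage, mem_Ioi]; linarith⟩
    · intro i j
      have hi : (i:ℝ) ≤ ((max i j : ℕ) : ℝ) := by exact_mod_cast le_max_left i j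
      have hj : (j:ℝ) ≤ ((max i j : ℕ) : ℝ) := by exact_mod_cast le_max_right i j
      refine ⟨max i j, fun y hy => ?_, fun y hy => ?_⟩ <;>
        simp only [mem_preimage, mem_Ioi] at * <;> linarith
  refine ⟨min (-(k : ℝ)) 0, min_le_right _ _, fun x => ?_⟩
  rcases eq_or_ne x 0 with rfl | hx
  · simp [homog_zero hph]
  · have hnx : (0:ℝ) < ‖x‖ := norm_pos_iff.2 hx
    set u := ‖x‖⁻¹ • x with hu_def
    have hu : ‖u‖ = 1 := norm_smul_inv_norm hx
    have hpu : -(k:ℝ) < p u := hk (mem_sphere_zero_iff_norm.2 hu)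
    have hx' : p x = ‖x‖ * p u := by
      have h0 : (‖x‖ : ℝ) • u = x := smul_inv_smul₀ hnx.ne' x
      have h2 := hph u ‖x‖ hnx
      rw [h0] at h2
      exact h2
    rw [hx']
    have h1 : min (-(k:ℝ)) 0 ≤ -(k:ℝ) := min_le_left _ _
    nlinarith


open RealInnerProductSpace in
private noncomputable def phi {n : ℕ} (u : EuclideanSpace ℝ (Fin n)) (c K γ : ℝ)
    (x : EuclideanSpace ℝ (Fin n)) : ℝ :=
  c * ⟪u, x⟫ - K * ‖x - ⟪u, x⟫ • u‖ + γ * min ⟪u, x⟫ 0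

open RealInnerProductSpace

private lemma phi_hom {n : ℕ} (u : EuclideanSpace ℝ (Fin n)) (c K γ : ℝ)
    (x : EuclideanSpace ℝ (Fin n)) (l : ℝ) (hl : 0 < l) :
    phi u c K γ (l • x) = l * phi u c K γ x := by
  have h1 : ⟪u, l • x⟫ = l * ⟪u, x⟫ := real_inner_smul_right u x l
  have h2 : (l • x) - (l * ⟪u, x⟫) • u = l • (x - ⟪u, x⟫ • u) := by
    rw [smul_sub, mul_smul]
  have h3 : min (l * ⟪u, x⟫) 0 = l * min ⟪u, x⟫ 0 := by
    rw [mul_min_of_nonneg _ _ hl.le, mul_zero]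
  simp only [phi, h1, h2, h3, norm_smul, Real.norm_eq_abs, abs_of_pos hl]
  ring

private lemma phi_concave {n : ℕ} (u : EuclideanSpace ℝ (Fin n)) (c : ℝ) {K γ : ℝ}
    (hK : 0 ≤ K) (hγ : 0 ≤ γ) : ConcaveOn ℝ Set.univ (phi u c K γ) := by
  refine ⟨convex_univ, fun x _ y _ a b ha hb hab => ?_⟩
  simp only [phi, smul_eq_mul]
  have hT : ⟪u, a • x + b • y⟫ = a * ⟪u, x⟫ + b * ⟪u, y⟫ := by
    rw [inner_add_right, real_inner_smul_right, real_inner_smul_right]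
  rw [hT]
  have hR : ‖(a • x + b • y) - (a * ⟪u, x⟫ + b * ⟪u, y⟫) • u‖ ≤
      a * ‖x - ⟪u, x⟫ • u‖ + b * ‖y - ⟪u, y⟫ • u‖ := by
    have heq : (a • x + b • y) - (a * ⟪u, x⟫ + b * ⟪u, y⟫) • u
        = a • (x - ⟪u, x⟫ • u) + b • (y - ⟪u, y⟫ • u) := by
      module
    rw [heq]
    calc ‖a • (x - ⟪u, x⟫ • u) + b • (y - ⟪u, y⟫ • u)‖
        ≤ ‖a • (x - ⟪u, x⟫ • u)‖ + ‖b • (y - ⟪u, y⟫ • u)‖ := norm_add_le _ _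
      _ = a * ‖x - ⟪u, x⟫ • u‖ + b * ‖y - ⟪u, y⟫ • u‖ := by
          rw [norm_smul, norm_smul, Real.norm_eq_abs, Real.norm_eq_abs,
            abs_of_nonneg ha, abs_of_nonneg hb]
  have hM : a * min ⟪u, x⟫ 0 + b * min ⟪u, y⟫ 0 ≤ min (a * ⟪u, x⟫ + b * ⟪u, y⟫) 0 := by
    have h1 := mul_le_mul_of_nonneg_left (min_le_left ⟪u, x⟫ 0) ha
    have h2 := mul_le_mul_of_nonneg_left (min_le_left ⟪u, y⟫ 0) hb
    have h3 := mul_le_mul_of_nonneg_left (min_le_right ⟪u, x⟫ 0) ha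
    have h4 := mul_le_mul_of_nonneg_left (min_le_right ⟪u, y⟫ 0) hb
    apply le_min <;> nlinarith
  nlinarith [mul_le_mul_of_nonneg_left hR hK, mul_le_mul_of_nonneg_left hM hγ]

private lemma phi_self {n : ℕ} {u : EuclideanSpace ℝ (Fin n)} (hu : ‖u‖ = 1) (c K γ : ℝ) :
    phi u c K γ u = c := by
  have h1 : ⟪u, u⟫ = 1 := by
    rw [real_inner_self_eq_norm_mul_norm, hu, mul_one]
  simp [phi, h1, hu]

set_option maxHeartbeats 1600000 in
private lemma key_minorant {n : ℕ} {p : EuclideanSpace ℝ (Fin n) → ℝ}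
    (hph : ∀ (x : EuclideanSpace ℝ (Fin n)) (l : ℝ), 0 < l → p (l • x) = l * p x)
    (hlsc : LowerSemicontinuous p) {m : ℝ} (hm0 : m ≤ 0)
    (hm : ∀ x, m * ‖x‖ ≤ p x) {u : EuclideanSpace ℝ (Fin n)} (hu : ‖u‖ = 1)
    {c : ℝ} (hc : c < p u) :
    ∃ ψ : EuclideanSpace ℝ (Fin n) → ℝ,
      (∀ (x : EuclideanSpace ℝ (Fin n)) (l : ℝ), 0 < l → ψ (l • x) = l * ψ x) ∧
      ConcaveOn ℝ Set.univ ψ ∧ (∀ x, ψ x ≤ p x) ∧ c ≤ ψ u := by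
  obtain ⟨ε, hε, hball⟩ : ∃ ε > 0, ∀ y, dist y u < ε → c < p y := by
    have h := hlsc u c hc
    rw [Metric.eventually_nhds_iff] at h
    obtain ⟨ε, hε, h⟩ := h
    exact ⟨ε, hε, fun y hy => h hy⟩
  obtain ⟨δ, hδ0, hδ1, hδε⟩ : ∃ δ : ℝ, 0 < δ ∧ δ ≤ 1 ∧ δ ≤ ε :=
    ⟨min ε 1, lt_min hε one_pos, min_le_right _ _, min_le_left _ _⟩
  obtain ⟨a, ha0, hca, hca'⟩ : ∃ a : ℝ, 0 ≤ a ∧ c ≤ a ∧ -a ≤ c :=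
    ⟨|c|, abs_nonneg c, le_abs_self c, neg_abs_le c⟩
  obtain ⟨b, hb0, hmb⟩ : ∃ b : ℝ, 0 ≤ b ∧ m = -b :=
    ⟨|m|, abs_nonneg m, by rw [abs_of_nonpos hm0, neg_neg]⟩
  obtain ⟨K, hK0, hKδ⟩ : ∃ K : ℝ, 0 ≤ K ∧ K * δ = (a + b) * 2 :=
    ⟨(a + b) * 2 / δ, by positivity, by field_simp⟩
  obtain ⟨γ, hγ0, hγab⟩ : ∃ γ : ℝ, 0 ≤ γ ∧ γ = a + 2 * b + 1 :=
    ⟨a + 2 * b + 1, by positivity, rfl⟩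
  -- the bound on the unit sphere
  have hsphere : ∀ x : EuclideanSpace ℝ (Fin n), ‖x‖ = 1 → phi u c K γ x ≤ p x := by
    intro x hx
    set T := ⟪u, x⟫ with hT_def
    set r := ‖x - T • u‖ with hr_def
    have hr0 : (0:ℝ) ≤ r := norm_nonneg _
    have hT1 : |T| ≤ 1 := by
      have h := abs_real_inner_le_norm u x
      rwa [hu, hx, one_mul] at h
    have hr2 : r ^ 2 = 1 - T ^ 2 := by
      rw [hr_def, norm_sub_sq_real, hx, real_inner_smul_right, real_inner_comm,
        norm_smul, Real.norm_eq_abs, hu, mul_one]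
      rw [← hT_def, sq_abs]
      ring
    have hψx : phi u c K γ x = c * T - K * r + γ * min T 0 := rfl
    rw [hψx]
    by_cases hA : 0 < T ∧ r < δ * T
    · obtain ⟨hT0, hrT⟩ := hA
      set y := T⁻¹ • x with hy_def
      have hyu : y - u = T⁻¹ • (x - T • u) := by
        rw [smul_sub, smul_smul, inv_mul_cancel₀ hT0.ne', one_smul]
      have hyd : dist y u < ε := by
        rw [dist_eq_norm, hyu, norm_smul, Real.norm_eq_abs, abs_of_pos (inv_pos.2 hT0)]
        have h1 : T⁻¹ * r < T⁻¹ * (δ * T) :=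
          mul_lt_mul_of_pos_left hrT (inv_pos.2 hT0)
        have h2 : T⁻¹ * (δ * T) = δ := by field_simp
        calc T⁻¹ * r < δ := by rw [← h2]; exact h1
          _ ≤ ε := hδε
      have hpy : c < p y := hball y hyd
      have hpx : p x = T * p y := by
        have h := hph y T hT0
        rw [hy_def, smul_inv_smul₀ hT0.ne'] at h
        exact h
      rw [min_eq_right hT0.le, hpx]
      have h3 : 0 ≤ T * (p y - c) := mul_nonneg hT0.le (by linarith)
      have h4 : 0 ≤ K * r := mul_nonneg hK0 hr0
      nlinarith [h3, h4]
    · have hpm : m ≤ p x := by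
        have h := hm x; rwa [hx, mul_one] at h
      have hmin_le : min T 0 ≤ 0 := min_le_right _ _
      clear_value T r
      clear hψx hr_def hT_def
      suffices h : c * T - K * r + γ * min T 0 ≤ m by linarith
      by_cases hT2 : T ≤ -(1/2)
      · rw [min_eq_left (by linarith : T ≤ 0)]
        have h1 : 0 ≤ c + γ := by rw [hγab]; linarith
        have h2 : 0 ≤ (c + γ) * (-(1/2) - T) :=
          mul_nonneg h1 (by linarith)
        have h4 : 0 ≤ K * r := mul_nonneg hK0 hr0
        rw [hmb]
        nlinarith [h2, h4]
      · push_neg at hT2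
        have hrδ : δ / 2 ≤ r := by
          rcases le_or_gt T 0 with hT0 | hT0
          · nlinarith [hr2, hδ1, hr0]
          · have hrT : δ * T ≤ r := by
              by_contra h
              push_neg at h
              exact hA ⟨hT0, h⟩
            rcases le_or_gt (1/2 : ℝ) T with h12 | h12
            · nlinarith [hrT, hδ0.le]
            · nlinarith [hr2, hδ1, hr0]
        have h1 : c * T ≤ a := by
          have := abs_mul c T
          have h2 : |c| * |T| ≤ |c| * 1 :=
            mul_le_mul_of_nonneg_left hT1 (abs_nonneg c)
          have h3 : c * T ≤ |c * T| := le_abs_self _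
          have h4 : |c| ≤ a := by
            rw [abs_le]; constructor <;> linarith
          nlinarith [this, h2, h3, h4, abs_nonneg c]
        have h5 : K * (δ / 2) ≤ K * r := mul_le_mul_of_nonneg_left hrδ hK0
        have h6 : γ * min T 0 ≤ 0 := by
          have := mul_le_mul_of_nonneg_left hmin_le hγ0
          simpa using this
        rw [hmb]
        nlinarith [h1, h5, h6, hKδ]
  -- bound everywhere
  have hbound : ∀ x, phi u c K γ x ≤ p x := by
    intro x
    rcases eq_or_ne x 0 with rfl | hx
    · have h0 : ⟪u, (0 : EuclideanSpace ℝ (Fin n))⟫ = (0:ℝ) := inner_zero_right u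
      simp [phi, h0, homog_zero hph]
    · have hnx : (0:ℝ) < ‖x‖ := norm_pos_iff.2 hx
      have hu' : ‖(‖x‖⁻¹ • x : EuclideanSpace ℝ (Fin n))‖ = 1 := norm_smul_inv_norm hx
      have h1 := hsphere _ hu'
      have h2 := phi_hom u c K γ (‖x‖⁻¹ • x) ‖x‖ hnx
      rw [smul_inv_smul₀ hnx.ne'] at h2
      have h3 := hph (‖x‖⁻¹ • x) ‖x‖ hnx
      rw [smul_inv_smul₀ hnx.ne'] at h3
      rw [h2, h3]
      exact mul_le_mul_of_nonneg_left h1 (norm_nonneg x)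
  exact ⟨phi u c K γ, phi_hom u c K γ, phi_concave u c hK0 hγ0, hbound,
    (phi_self hu c K γ).symm.le⟩

set_option maxHeartbeats 1600000 in
theorem stmt_9 {n : ℕ} (p : EuclideanSpace ℝ (Fin n) → ℝ)
    (hph : ∀ (x : EuclideanSpace ℝ (Fin n)) (l : ℝ), 0 < l → p (l • x) = l * p x) :
    LowerSemicontinuous p ↔
      ∃ Ψ : Set (EuclideanSpace ℝ (Fin n) → ℝ), Ψ.Nonempty ∧
        (∀ ψ ∈ Ψ, (∀ (x : EuclideanSpace ℝ (Fin n)) (l : ℝ), 0 < l → ψ (l • x) = l * ψ x)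
          ∧ ConcaveOn ℝ Set.univ ψ) ∧
        (∀ x : EuclideanSpace ℝ (Fin n), BddAbove (Set.range fun ψ : Ψ => ψ.1 x)) ∧
        (∀ x, p x = ⨆ ψ : Ψ, ψ.1 x) := by
  constructor
  · intro hlsc
    obtain ⟨m, hm0, hm⟩ := exists_lower_bound hph hlsc
    set Ψ : Set (EuclideanSpace ℝ (Fin n) → ℝ) :=
      {ψ | (∀ (x : EuclideanSpace ℝ (Fin n)) (l : ℝ), 0 < l → ψ (l • x) = l * ψ x) ∧
        ConcaveOn ℝ Set.univ ψ ∧ ∀ x, ψ x ≤ p x} with hΨ_def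
    have hψ0 : (fun x : EuclideanSpace ℝ (Fin n) => m * ‖x‖) ∈ Ψ := by
      refine ⟨fun x l hl => ?_, ⟨convex_univ, fun x _ y _ a b ha hb hab => ?_⟩, hm⟩
      · show m * ‖l • x‖ = l * (m * ‖x‖)
        rw [norm_smul, Real.norm_eq_abs, abs_of_pos hl]; ring
      · simp only [smul_eq_mul]
        have h := norm_add_le (a • x) (b • y)
        rw [norm_smul, norm_smul, Real.norm_eq_abs, Real.norm_eq_abs,
          abs_of_nonneg ha, abs_of_nonneg hb] at h
        nlinarith [mul_le_mul_of_nonpos_left h hm0]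
    have hbddA : ∀ x : EuclideanSpace ℝ (Fin n), BddAbove (Set.range fun ψ : Ψ => ψ.1 x) := by
      intro x
      refine ⟨p x, ?_⟩
      rintro v ⟨ψ, rfl⟩
      exact ψ.2.2.2 x
    have hne : Nonempty ↥Ψ := ⟨⟨_, hψ0⟩⟩
    refine ⟨Ψ, ⟨_, hψ0⟩, fun ψ hψ => ⟨hψ.1, hψ.2.1⟩, hbddA, fun x => ?_⟩
    refine le_antisymm ?_ (ciSup_le fun ψ => ψ.2.2.2 x)
    apply le_of_forall_lt_imp_le_of_dense
    intro c hc
    rcases eq_or_ne x 0 with rfl | hx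
    · have h0 : p 0 = 0 := homog_zero hph
      have h1 : c ≤ (fun x : EuclideanSpace ℝ (Fin n) => m * ‖x‖) 0 := by
        simp only [norm_zero, mul_zero]
        rw [h0] at hc; linarith
      exact h1.trans (le_ciSup (hbddA 0) (⟨_, hψ0⟩ : Ψ))
    · have hnx : (0:ℝ) < ‖x‖ := norm_pos_iff.2 hx
      have hu' : ‖(‖x‖⁻¹ • x : EuclideanSpace ℝ (Fin n))‖ = 1 := norm_smul_inv_norm hx
      have h3 := hph (‖x‖⁻¹ • x) ‖x‖ hnx
      rw [smul_inv_smul₀ hnx.ne'] at h3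
      have hc' : c / ‖x‖ < p (‖x‖⁻¹ • x) := by
        rw [div_lt_iff₀ hnx]
        calc c < p x := hc
          _ = p (‖x‖⁻¹ • x) * ‖x‖ := by rw [h3]; ring
      obtain ⟨ψ, hψh, hψcon, hψle, hψu⟩ :=
        key_minorant hph hlsc hm0 hm hu' hc'
      have hψΨ : ψ ∈ Ψ := ⟨hψh, hψcon, hψle⟩
      have h4 := hψh (‖x‖⁻¹ • x) ‖x‖ hnx
      rw [smul_inv_smul₀ hnx.ne'] at h4
      have h5 : c ≤ ψ x := by
        rw [h4]
        calc c = c / ‖x‖ * ‖x‖ := by field_simp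
          _ ≤ ψ (‖x‖⁻¹ • x) * ‖x‖ := by
              exact mul_le_mul_of_nonneg_right hψu (norm_nonneg x)
          _ = ‖x‖ * ψ (‖x‖⁻¹ • x) := by ring
      exact h5.trans (le_ciSup (hbddA x) (⟨ψ, hψΨ⟩ : Ψ))
  · rintro ⟨Ψ, hne, hΨ, hbdd, hsup⟩
    have hp_eq : p = fun x => ⨆ ψ : Ψ, ψ.1 x := funext hsup
    rw [hp_eq]
    apply lowerSemicontinuous_ciSup hbdd
    intro ψ
    have hcont : Continuous ψ.1 := by
      have h := ((hΨ ψ.1 ψ.2).2).continuousOn isOpen_univ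
      rwa [continuousOn_univ] at h
    exact hcont.lowerSemicontinuous
end

section
/- A function p : ℝⁿ → ℝ is positively homogeneous and continuous on ℝⁿ if and only if there exist nonempty index sets I, S and a two-index family {a_{is} ∈ ℝⁿ : i∈I, s∈S} such that for every x ∈ ℝⁿ: inf_{i∈I} ⟨a_{is},x⟩ > -∞ for each s ∈ S, sup_{s∈S} ⟨a_{is},x⟩ < +∞ for each i ∈ I, and p(x) = inf_{i∈I} sup_{s∈S} ⟨a_{is},x⟩ = sup_{s∈S} inf_{i∈I} ⟨a_{is},x⟩. -/
open Set

local notation "E" n => EuclideanSpace ℝ (Fin n)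



lemma sandwich {n : ℕ} (f g : (E n) → ℝ)
    (hfadd : ∀ x y, f (x+y) ≤ f x + f y)
    (hfhom : ∀ (l:ℝ), 0 < l → ∀ x, f (l•x) = l * f x)
    (hgadd : ∀ x y, g x + g y ≤ g (x+y))
    (hghom : ∀ (l:ℝ), 0 < l → ∀ x, g (l•x) = l * g x)
    (hgf : ∀ x, g x ≤ f x) :
    ∃ a : E n, ∀ x, g x ≤ inner ℝ a x ∧ (inner ℝ a x : ℝ) ≤ f x := by
  have hf0 : f 0 = 0 := by have := hfhom 2 two_pos 0; rw [smul_zero] at this; linarith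
  have hg0 : g 0 = 0 := by have := hghom 2 two_pos 0; rw [smul_zero] at this; linarith
  set q : (E n) → ℝ := fun x => ⨅ y, (f (x+y) - g y) with hq
  have hbdd : ∀ x, BddBelow (range fun y : E n => f (x+y) - g y) := by
    intro x
    refine ⟨g x, ?_⟩
    rintro _ ⟨y, rfl⟩
    have h1 := hgadd x y
    have h2 := hgf (x+y)
    simp only; linarith
  have hqf : ∀ x, q x ≤ f x := by
    intro x
    have := ciInf_le (hbdd x) 0
    simpa [hg0] using this
  have hqg : ∀ x, g x ≤ q x := by
    intro x
    refine le_ciInf fun y => ?_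
    have h1 := hgadd x y
    have h2 := hgf (x+y)
    linarith
  have hqadd : ∀ x y, q (x+y) ≤ q x + q y := by
    intro x₁ x₂
    have key : ∀ y₁ y₂ : E n, q (x₁+x₂) ≤ (f (x₁+y₁) - g y₁) + (f (x₂+y₂) - g y₂) := by
      intro y₁ y₂
      have h1 : q (x₁+x₂) ≤ f (x₁+x₂+(y₁+y₂)) - g (y₁+y₂) := ciInf_le (hbdd _) _
      have h2 : f (x₁+x₂+(y₁+y₂)) ≤ f (x₁+y₁) + f (x₂+y₂) := by
        have := hfadd (x₁+y₁) (x₂+y₂)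
        have he : x₁+x₂+(y₁+y₂) = (x₁+y₁)+(x₂+y₂) := by abel
        rw [he]; exact this
      have h3 := hgadd y₁ y₂
      linarith
    have step : ∀ y₁ : E n, q (x₁+x₂) - (f (x₁+y₁) - g y₁) ≤ q x₂ := by
      intro y₁
      refine le_ciInf fun y₂ => ?_
      have := key y₁ y₂; linarith
    have : q (x₁+x₂) - q x₂ ≤ q x₁ := by
      refine le_ciInf fun y₁ => ?_
      have := step y₁; linarith
    linarith
  have hqhom : ∀ (c:ℝ), 0 < c → ∀ x, q (c•x) = c * q x := by
    intro c hc x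
    have hrange : (range fun y : E n => f (c•x+y) - g y)
        = range fun z : E n => c * (f (x+z) - g z) := by
      ext r
      constructor
      · rintro ⟨y, rfl⟩
        refine ⟨c⁻¹ • y, ?_⟩
        simp only
        rw [mul_sub, ← hfhom c hc, ← hghom c hc, smul_add, smul_smul,
          mul_inv_cancel₀ hc.ne', one_smul]
      · rintro ⟨z, rfl⟩
        refine ⟨c • z, ?_⟩
        simp only
        rw [mul_sub, ← hfhom c hc, ← hghom c hc, smul_add]
    have : q (c•x) = sInf (range fun y : E n => f (c•x+y) - g y) := (sInf_range).symm
    rw [this, hrange, sInf_range]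
    rw [← Real.mul_iInf_of_nonneg hc.le]
  obtain ⟨ℓ, -, hℓ⟩ := exists_extension_of_le_sublinear ((0 : (E n) →ₗ[ℝ] ℝ).toPMap ⊥) q
    (fun c hc x => hqhom c hc x) hqadd
    (by rintro ⟨x, hx⟩
        have : x = 0 := by simpa using hx
        subst this
        have : q 0 ≥ g 0 := hqg 0
        simp [LinearMap.toPMap]
        rw [hg0] at this; linarith)
  set a : E n := (InnerProductSpace.toDual ℝ (E n)).symm (LinearMap.toContinuousLinearMap ℓ) with ha
  refine ⟨a, fun x => ?_⟩
  have hval : (inner ℝ a x : ℝ) = ℓ x := by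
    rw [ha, InnerProductSpace.toDual_symm_apply]; rfl
  constructor
  · rw [hval]
    have h1 : ℓ (-x) ≤ q (-x) := hℓ (-x)
    have h2 : q (-x) ≤ f ((-x)+x) - g x := ciInf_le (hbdd _) x
    have h3 : ℓ (-x) = - ℓ x := by rw [map_neg]
    simp only [neg_add_cancel, hf0] at h2
    linarith
  · rw [hval]; exact (hℓ x).trans (hqf x)


lemma exists_K {n : ℕ} (h d : (E n) → ℝ) (hh : Continuous h) (hd : Continuous d)
    (hdnn : ∀ y, 0 ≤ d y)
    (hneg : ∀ y, ‖y‖ = 1 → d y = 0 → h y < 0) :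
    ∃ K : ℝ, 0 ≤ K ∧ ∀ y, ‖y‖ = 1 → h y ≤ K * d y := by
  set A : Set (E n) := Metric.sphere 0 1 ∩ {y | 0 ≤ h y} with hA
  have hAcomp : IsCompact A :=
    (isCompact_sphere 0 1).inter_right (isClosed_le continuous_const hh)
  have hmemA : ∀ y, ‖y‖ = 1 → 0 ≤ h y → y ∈ A := by
    intro y hy1 hy2
    exact ⟨by simpa [mem_sphere_zero_iff_norm] using hy1, hy2⟩
  rcases A.eq_empty_or_nonempty with hAe | hAne
  · refine ⟨0, le_refl 0, fun y hy => ?_⟩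
    by_contra hcon
    push_neg at hcon
    have : 0 ≤ h y := by nlinarith [hdnn y]
    have : y ∈ A := hmemA y hy this
    rw [hAe] at this; exact this
  · obtain ⟨y₀, hy₀A, hy₀min⟩ := hAcomp.exists_isMinOn hAne hd.continuousOn
    obtain ⟨y₁, hy₁A, hy₁max⟩ := hAcomp.exists_isMaxOn hAne hh.continuousOn
    have hy₀sph : ‖y₀‖ = 1 := by
      have := hy₀A.1; rwa [mem_sphere_zero_iff_norm] at this
    have hδpos : 0 < d y₀ := by
      rcases lt_or_eq_of_le (hdnn y₀) with h' | h'
      · exact h'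
      · exact absurd hy₀A.2 (not_le.mpr (hneg y₀ hy₀sph h'.symm))
    have hC : 0 ≤ h y₁ := by
      have := hy₁max hy₀A
      have h2 := hy₀A.2
      exact h2.trans this
    refine ⟨h y₁ / d y₀, div_nonneg hC hδpos.le, fun y hy => ?_⟩
    by_cases hhy : 0 ≤ h y
    · have hyA : y ∈ A := hmemA y hy hhy
      have h1 : h y ≤ h y₁ := hy₁max hyA
      have h2 : d y₀ ≤ d y := hy₀min hyA
      calc h y ≤ h y₁ := h1
        _ = (h y₁ / d y₀) * d y₀ := by field_simp
        _ ≤ (h y₁ / d y₀) * d y := by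
            exact mul_le_mul_of_nonneg_left h2 (div_nonneg hC hδpos.le)
    · push_neg at hhy
      exact hhy.le.trans (mul_nonneg (div_nonneg hC hδpos.le) (hdnn y))

lemma exists_majorant_at {n : ℕ} (p : (E n) → ℝ)
    (hp : ∀ (x : E n) (l : ℝ), 0 < l → p (l • x) = l * p x) (hc : Continuous p)
    (u : E n) (hu : ‖u‖ = 1) (ε : ℝ) (hε : 0 < ε) :
    ∃ f : (E n) → ℝ,
      (∀ x y, f (x+y) ≤ f x + f y) ∧
      (∀ (l:ℝ), 0 < l → ∀ x, f (l•x) = l * f x) ∧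
      (∀ y, p y ≤ f y) ∧
      f u ≤ p u + ε := by
  set c₁ : ℝ := p u + ε with hc₁
  set c₂ : ℝ := min (p u + ε) (-(p (-u)) - ε) with hc₂
  have hc₂₁ : c₂ ≤ c₁ := min_le_left _ _
  set t : (E n) → ℝ := fun y => inner ℝ u y with ht
  set d : (E n) → ℝ := fun y => ‖y - (t y) • u‖ with hd
  have htcont : Continuous t := Continuous.inner continuous_const continuous_id
  have hdcont : Continuous d := by
    apply Continuous.norm
    exact continuous_id.sub (htcont.smul continuous_const)
  set h : (E n) → ℝ := fun y => p y - max (c₁ * t y) (c₂ * t y) with hh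
  have hhcont : Continuous h := by
    apply hc.sub
    exact Continuous.max (continuous_const.mul htcont) (continuous_const.mul htcont)
  have htu : t u = 1 := by
    rw [ht]
    simp only
    rw [real_inner_self_eq_norm_sq, hu]; norm_num
  have hp0 : p 0 = 0 := by
    have := hp 0 2 two_pos; rw [smul_zero] at this; linarith
  have hneg : ∀ y, ‖y‖ = 1 → d y = 0 → h y < 0 := by
    intro y hy1 hdy
    have hyeq : y = (t y) • u := by
      have := norm_eq_zero.mp hdy
      rwa [sub_eq_zero] at this
    have habs : |t y| = 1 := by
      rw [hyeq] at hy1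
      rwa [norm_smul, hu, mul_one, Real.norm_eq_abs] at hy1
    rcases abs_eq (by norm_num : (0:ℝ) ≤ 1) |>.mp habs with h1 | h1
    · have : y = u := by rw [hyeq, h1, one_smul]
      subst this
      rw [hh]
      simp only
      rw [h1, mul_one, mul_one, max_eq_left hc₂₁, hc₁]
      linarith
    · have : y = -u := by rw [hyeq, h1]; simp
      subst this
      rw [hh]
      simp only
      rw [h1, mul_neg_one, mul_neg_one, max_neg_neg]
      have hx : c₁ ⊓ c₂ ≤ -p (-u) - ε := le_trans (min_le_right c₁ c₂) (min_le_right _ _)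
      linarith
  obtain ⟨K, hK0, hK⟩ := exists_K h d hhcont hdcont (fun y => norm_nonneg _) hneg
  set f : (E n) → ℝ := fun y => max (c₁ * t y) (c₂ * t y) + K * d y with hf
  have hfhom : ∀ (l:ℝ), 0 < l → ∀ x, f (l•x) = l * f x := by
    intro l hl x
    have htl : t (l•x) = l * t x := real_inner_smul_right _ _ _
    have hdl : d (l•x) = l * d x := by
      rw [hd]
      simp only [htl]
      rw [mul_smul, ← smul_sub, norm_smul, Real.norm_eq_abs, abs_of_pos hl]
    rw [hf]
    simp only [htl, hdl]
    rw [mul_add, mul_max_of_nonneg _ _ hl.le]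
    ring_nf
  have hfadd : ∀ x y, f (x+y) ≤ f x + f y := by
    intro x y
    have htxy : t (x+y) = t x + t y := inner_add_right _ _ _
    have hdxy : d (x+y) ≤ d x + d y := by
      rw [hd]
      simp only [htxy, add_smul]
      have he : x + y - (t x • u + t y • u) = (x - t x • u) + (y - t y • u) := by abel
      rw [he]
      exact norm_add_le _ _
    have hmax : max (c₁ * t (x+y)) (c₂ * t (x+y))
        ≤ max (c₁ * t x) (c₂ * t x) + max (c₁ * t y) (c₂ * t y) := by
      rw [htxy]
      apply max_le
      · rw [mul_add]
        exact add_le_add (le_max_left _ _) (le_max_left _ _)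
      · rw [mul_add]
        exact add_le_add (le_max_right _ _) (le_max_right _ _)
    rw [hf]
    simp only
    have : K * d (x+y) ≤ K * (d x + d y) := mul_le_mul_of_nonneg_left hdxy hK0
    rw [mul_add] at this
    linarith [hmax]
  have hmaj : ∀ y, p y ≤ f y := by
    intro y
    rcases eq_or_ne y 0 with rfl | hy0
    · have ht0 : t 0 = 0 := inner_zero_right _
      have hd0 : d 0 = 0 := by rw [hd]; simp [ht0]
      rw [hf]
      simp only [ht0, hd0, hp0]
      simp
    · have hny : 0 < ‖y‖ := norm_pos_iff.mpr hy0
      set z : E n := ‖y‖⁻¹ • y with hz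
      have hz1 : ‖z‖ = 1 := by
        rw [hz, norm_smul, Real.norm_eq_abs, abs_of_pos (inv_pos.mpr hny), inv_mul_cancel₀ hny.ne']
      have hyz : y = ‖y‖ • z := by
        rw [hz, smul_smul, mul_inv_cancel₀ hny.ne', one_smul]
      have hsph := hK z hz1
      rw [hh] at hsph
      simp only at hsph
      have : p z ≤ f z := by rw [hf]; simp only; linarith
      have h4 : p y = ‖y‖ * p z := by nth_rewrite 1 [hyz]; exact hp z ‖y‖ hny
      have h5 : f y = ‖y‖ * f z := by nth_rewrite 1 [hyz]; exact hfhom ‖y‖ hny z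
      rw [h4, h5]
      exact mul_le_mul_of_nonneg_left this hny.le
  refine ⟨f, hfadd, hfhom, hmaj, ?_⟩
  have hdu : d u = 0 := by rw [hd]; simp [htu]
  rw [hf]
  simp only [htu, hdu, mul_one, mul_zero, add_zero, max_eq_left hc₂₁, hc₁]
  exact max_le le_rfl hc₂₁


lemma exists_majorant_family {n : ℕ} (p : (E n) → ℝ)
    (hp : ∀ (x : E n) (l : ℝ), 0 < l → p (l • x) = l * p x) (hc : Continuous p)
    (hmaj_at : ∀ (u : E n), ‖u‖ = 1 → ∀ ε : ℝ, 0 < ε →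
      ∃ f : (E n) → ℝ,
      (∀ x y, f (x+y) ≤ f x + f y) ∧
      (∀ (l:ℝ), 0 < l → ∀ x, f (l•x) = l * f x) ∧
      (∀ y, p y ≤ f y) ∧
      f u ≤ p u + ε) :
    ∃ F : ((E n) × ℝ) → (E n) → ℝ,
      (∀ i x y, F i (x+y) ≤ F i x + F i y) ∧
      (∀ i (l:ℝ), 0 < l → ∀ x, F i (l•x) = l * F i x) ∧
      (∀ i y, p y ≤ F i y) ∧
      (∀ (x : E n) (ε : ℝ), 0 < ε → ∃ i, F i x < p x + ε) := by
  have hp0 : p 0 = 0 := by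
    have := hp 0 2 two_pos; rw [smul_zero] at this; linarith
  -- global bound M
  obtain ⟨M, hM0, hM⟩ : ∃ M : ℝ, 0 ≤ M ∧ ∀ y, p y ≤ M * ‖y‖ := by
    rcases (Metric.sphere (0 : E n) 1).eq_empty_or_nonempty with he | hne
    · refine ⟨0, le_rfl, fun y => ?_⟩
      have hy : y = 0 := by
        by_contra hy0
        have hny : 0 < ‖y‖ := norm_pos_iff.mpr hy0
        have : (‖y‖⁻¹ • y) ∈ Metric.sphere (0 : E n) 1 := by
          rw [mem_sphere_zero_iff_norm, norm_smul, Real.norm_eq_abs,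
            abs_of_pos (inv_pos.mpr hny), inv_mul_cancel₀ hny.ne']
        rw [he] at this; exact this
      rw [hy, hp0]; simp
    · obtain ⟨y₁, hy₁, hy₁max⟩ := (isCompact_sphere (0 : E n) 1).exists_isMaxOn hne hc.continuousOn
      refine ⟨max (p y₁) 0, le_max_right _ _, fun y => ?_⟩
      rcases eq_or_ne y 0 with rfl | hy0
      · rw [hp0]; simp
      · have hny : 0 < ‖y‖ := norm_pos_iff.mpr hy0
        set z : E n := ‖y‖⁻¹ • y with hz
        have hz1 : z ∈ Metric.sphere (0 : E n) 1 := by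
          rw [mem_sphere_zero_iff_norm, hz, norm_smul, Real.norm_eq_abs,
            abs_of_pos (inv_pos.mpr hny), inv_mul_cancel₀ hny.ne']
        have hyz : y = ‖y‖ • z := by
          rw [hz, smul_smul, mul_inv_cancel₀ hny.ne', one_smul]
        have h4 : p y = ‖y‖ * p z := by nth_rewrite 1 [hyz]; exact hp z ‖y‖ hny
        have h5 : p z ≤ max (p y₁) 0 := le_trans (hy₁max hz1) (le_max_left _ _)
        rw [h4, mul_comm]
        exact mul_le_mul_of_nonneg_right h5 hny.le
  classical
  set F : ((E n) × ℝ) → (E n) → ℝ := fun i =>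
    if h : ‖i.1‖ = 1 ∧ 0 < i.2 then (hmaj_at i.1 h.1 i.2 h.2).choose
    else fun y => M * ‖y‖ with hF
  have hspec : ∀ i : (E n) × ℝ, (h : ‖i.1‖ = 1 ∧ 0 < i.2) →
      F i = (hmaj_at i.1 h.1 i.2 h.2).choose := by
    intro i h; rw [hF]; simp [h]
  refine ⟨F, ?_, ?_, ?_, ?_⟩
  · intro i x y
    by_cases h : ‖i.1‖ = 1 ∧ 0 < i.2
    · rw [hspec i h]; exact (hmaj_at i.1 h.1 i.2 h.2).choose_spec.1 x y
    · rw [hF]; simp only [h, dite_false]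
      calc M * ‖x + y‖ ≤ M * (‖x‖ + ‖y‖) :=
            mul_le_mul_of_nonneg_left (norm_add_le x y) hM0
        _ = M * ‖x‖ + M * ‖y‖ := by ring
  · intro i l hl x
    by_cases h : ‖i.1‖ = 1 ∧ 0 < i.2
    · rw [hspec i h]; exact (hmaj_at i.1 h.1 i.2 h.2).choose_spec.2.1 l hl x
    · rw [hF]; simp only [h, dite_false]
      rw [norm_smul, Real.norm_eq_abs, abs_of_pos hl]; ring
  · intro i y
    by_cases h : ‖i.1‖ = 1 ∧ 0 < i.2
    · rw [hspec i h]; exact (hmaj_at i.1 h.1 i.2 h.2).choose_spec.2.2.1 y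
    · rw [hF]; simp only [h, dite_false]
      exact hM y
  · intro x ε hε
    rcases eq_or_ne x 0 with rfl | hx0
    · refine ⟨(0, 0), ?_⟩
      have h : ¬(‖((0, 0) : (E n) × ℝ).1‖ = 1 ∧ (0:ℝ) < ((0,0) : (E n) × ℝ).2) := by
        simp
      rw [hF]; simp only [h, dite_false]
      rw [hp0]; simp [hε]
    · have hnx : 0 < ‖x‖ := norm_pos_iff.mpr hx0
      set u : E n := ‖x‖⁻¹ • x with hu
      have hu1 : ‖u‖ = 1 := by
        rw [hu, norm_smul, Real.norm_eq_abs, abs_of_pos (inv_pos.mpr hnx), inv_mul_cancel₀ hnx.ne']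
      set ε' : ℝ := ε / (‖x‖ + 1) with hε'
      have hε'pos : 0 < ε' := div_pos hε (by linarith)
      set i : (E n) × ℝ := (u, ε') with hi
      have h : ‖i.1‖ = 1 ∧ 0 < i.2 := ⟨hu1, hε'pos⟩
      refine ⟨i, ?_⟩
      obtain ⟨hadd, hhom, hmaj, hval⟩ := (hmaj_at i.1 h.1 i.2 h.2).choose_spec
      rw [hspec i h]
      have hxu : x = ‖x‖ • u := by
        rw [hu, smul_smul, mul_inv_cancel₀ hnx.ne', one_smul]
      have h1 : (hmaj_at i.1 h.1 i.2 h.2).choose x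
          = ‖x‖ * (hmaj_at i.1 h.1 i.2 h.2).choose u := by
        nth_rewrite 1 [hxu]; exact hhom ‖x‖ hnx u
      have h2 : p x = ‖x‖ * p u := by
        nth_rewrite 1 [hxu]; exact hp u ‖x‖ hnx
      have h3 : (hmaj_at i.1 h.1 i.2 h.2).choose u ≤ p u + ε' := hval
      have h4 : ‖x‖ * ε' < ε := by
        rw [hε']
        rw [div_eq_inv_mul, ← mul_assoc]
        have : ‖x‖ * (‖x‖ + 1)⁻¹ < 1 := by
          rw [mul_inv_lt_iff₀ (by linarith), one_mul]; linarith
        nlinarith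
      calc (hmaj_at i.1 h.1 i.2 h.2).choose x = ‖x‖ * (hmaj_at i.1 h.1 i.2 h.2).choose u := h1
        _ ≤ ‖x‖ * (p u + ε') := mul_le_mul_of_nonneg_left h3 hnx.le
        _ = p x + ‖x‖ * ε' := by rw [h2]; ring
        _ < p x + ε := by linarith
theorem stmt_10 {n : ℕ} (p : EuclideanSpace ℝ (Fin n) → ℝ) :
    ((∀ (x : EuclideanSpace ℝ (Fin n)) (l : ℝ), 0 < l → p (l • x) = l * p x) ∧ Continuous p)
    ↔
    ∃ (I S : Type) (_ : Nonempty I) (_ : Nonempty S)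
      (a : I → S → EuclideanSpace ℝ (Fin n)),
      (∀ (x : EuclideanSpace ℝ (Fin n)) (s : S),
        BddBelow (Set.range fun i : I => (inner ℝ (a i s) x : ℝ))) ∧
      (∀ (x : EuclideanSpace ℝ (Fin n)) (i : I),
        BddAbove (Set.range fun s : S => (inner ℝ (a i s) x : ℝ))) ∧
      (∀ x : EuclideanSpace ℝ (Fin n),
        (p x = ⨅ i : I, ⨆ s : S, (inner ℝ (a i s) x : ℝ)) ∧
        (p x = ⨆ s : S, ⨅ i : I, (inner ℝ (a i s) x : ℝ))) := by
  constructor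
  · rintro ⟨hp, hc⟩
    -- majorant family
    obtain ⟨F, hFadd, hFhom, hFmaj, hFapx⟩ :=
      exists_majorant_family p hp hc (fun u hu ε hε => exists_majorant_at p hp hc u hu ε hε)
    -- minorant family via q = -p(-x)
    set q : (E n) → ℝ := fun x => -p (-x) with hq
    have hqhom : ∀ (x : E n) (l : ℝ), 0 < l → q (l • x) = l * q x := by
      intro x l hl
      rw [hq]
      simp only
      rw [show -(l • x) = l • (-x) from by rw [smul_neg], hp (-x) l hl]
      ring
    have hqc : Continuous q := (hc.comp continuous_neg).neg
    obtain ⟨F', hF'add, hF'hom, hF'maj, hF'apx⟩ :=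
      exists_majorant_family q hqhom hqc (fun u hu ε hε => exists_majorant_at q hqhom hqc u hu ε hε)
    set G : ((E n) × ℝ) → (E n) → ℝ := fun s x => -(F' s (-x)) with hG
    have hGadd : ∀ s x y, G s x + G s y ≤ G s (x + y) := by
      intro s x y
      have := hF'add s (-x) (-y)
      rw [hG]; simp only
      rw [show -(x+y) = (-x) + (-y) from by abel] at *
      linarith
    have hGhom : ∀ s (l:ℝ), 0 < l → ∀ x, G s (l • x) = l * G s x := by
      intro s l hl x
      rw [hG]; simp only
      rw [show -(l • x) = l • (-x) from by rw [smul_neg], hF'hom s l hl (-x)]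
      ring
    have hGmin : ∀ s x, G s x ≤ p x := by
      intro s x
      have := hF'maj s (-x)
      rw [hq] at this
      simp only [neg_neg] at this
      rw [hG]; simp only; linarith
    have hGapx : ∀ (x : E n) (ε : ℝ), 0 < ε → ∃ s, p x - ε < G s x := by
      intro x ε hε
      obtain ⟨s, hs⟩ := hF'apx (-x) ε hε
      refine ⟨s, ?_⟩
      rw [hq] at hs
      simp only [neg_neg] at hs
      rw [hG]; simp only; linarith
    -- sandwich
    have hsand : ∀ (i s : (E n) × ℝ),
        ∃ a : E n, ∀ x, G s x ≤ inner ℝ a x ∧ (inner ℝ a x : ℝ) ≤ F i x := by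
      intro i s
      exact sandwich (F i) (G s) (hFadd i) (hFhom i) (hGadd s) (hGhom s)
        (fun x => (hGmin s x).trans (hFmaj i x))
    choose a ha using hsand
    refine ⟨(E n) × ℝ, (E n) × ℝ, ⟨(0,0)⟩, ⟨(0,0)⟩, a, ?_, ?_, ?_⟩
    · intro x s
      exact ⟨G s x, by rintro _ ⟨i, rfl⟩; exact (ha i s x).1⟩
    · intro x i
      exact ⟨F i x, by rintro _ ⟨s, rfl⟩; exact (ha i s x).2⟩
    · intro x
      have hbb : ∀ s, BddBelow (Set.range fun i => (inner ℝ (a i s) x : ℝ)) :=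
        fun s => ⟨G s x, by rintro _ ⟨i, rfl⟩; exact (ha i s x).1⟩
      have hba : ∀ i, BddAbove (Set.range fun s => (inner ℝ (a i s) x : ℝ)) :=
        fun i => ⟨F i x, by rintro _ ⟨s, rfl⟩; exact (ha i s x).2⟩
      have key1 : ∀ i, p x ≤ ⨆ s, (inner ℝ (a i s) x : ℝ) := by
        intro i
        refine le_of_forall_pos_le_add fun ε hε => ?_
        obtain ⟨s, hs⟩ := hGapx x ε hε
        have h1 : (inner ℝ (a i s) x : ℝ) ≤ ⨆ s, (inner ℝ (a i s) x : ℝ) := le_ciSup (hba i) s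
        have h2 := (ha i s x).1
        linarith
      have key2 : ∀ i, (⨆ s, (inner ℝ (a i s) x : ℝ)) ≤ F i x :=
        fun i => ciSup_le fun s => (ha i s x).2
      have key1' : ∀ s, (⨅ i, (inner ℝ (a i s) x : ℝ)) ≤ p x := by
        intro s
        refine le_of_forall_pos_le_add fun ε hε => ?_
        obtain ⟨i, hi⟩ := hFapx x ε hε
        have h1 : (⨅ i, (inner ℝ (a i s) x : ℝ)) ≤ inner ℝ (a i s) x := ciInf_le (hbb s) i
        have h2 := (ha i s x).2
        linarith
      have key2' : ∀ s, G s x ≤ ⨅ i, (inner ℝ (a i s) x : ℝ) :=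
        fun s => le_ciInf fun i => (ha i s x).1
      constructor
      · refine le_antisymm (le_ciInf key1) ?_
        refine le_of_forall_pos_le_add fun ε hε => ?_
        obtain ⟨i, hi⟩ := hFapx x ε hε
        have h1 : (⨅ i, ⨆ s, (inner ℝ (a i s) x : ℝ)) ≤ ⨆ s, (inner ℝ (a i s) x : ℝ) := by
          apply ciInf_le
          exact ⟨p x, by rintro _ ⟨i', rfl⟩; exact key1 i'⟩
        have h2 := key2 i
        linarith
      · refine le_antisymm ?_ (ciSup_le key1')
        refine le_of_forall_pos_le_add fun ε hε => ?_
        obtain ⟨s, hs⟩ := hGapx x ε hε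
        have h1 : (⨅ i, (inner ℝ (a i s) x : ℝ)) ≤ ⨆ s, ⨅ i, (inner ℝ (a i s) x : ℝ) := by
          apply le_ciSup (f := fun s => ⨅ i, (inner ℝ (a i s) x : ℝ))
          exact ⟨p x, by rintro _ ⟨s', rfl⟩; exact key1' s'⟩
        have h2 := key2' s
        linarith
  · rintro ⟨I, S, hI, hS, a, hbb, hba, hrep⟩
    have hIne : Nonempty I := hI
    have hSne : Nonempty S := hS
    set fi : I → (E n) → ℝ := fun i x => ⨆ s, (inner ℝ (a i s) x : ℝ) with hfi
    set gs : S → (E n) → ℝ := fun s x => ⨅ i, (inner ℝ (a i s) x : ℝ) with hgs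
    have hbbfi : ∀ x, BddBelow (Set.range fun i => fi i x) := by
      intro x
      obtain ⟨s₀⟩ := hSne
      refine ⟨gs s₀ x, ?_⟩
      rintro _ ⟨i, rfl⟩
      calc gs s₀ x ≤ inner ℝ (a i s₀) x := ciInf_le (hbb x s₀) i
        _ ≤ fi i x := le_ciSup (hba x i) s₀
    have hbags : ∀ x, BddAbove (Set.range fun s => gs s x) := by
      intro x
      obtain ⟨i₀⟩ := hIne
      refine ⟨fi i₀ x, ?_⟩
      rintro _ ⟨s, rfl⟩
      calc gs s x ≤ inner ℝ (a i₀ s) x := ciInf_le (hbb x s) i₀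
        _ ≤ fi i₀ x := le_ciSup (hba x i₀) s
    have hple : ∀ i x, p x ≤ fi i x := by
      intro i x
      rw [(hrep x).1]
      exact ciInf_le (hbbfi x) i
    have hpge : ∀ s x, gs s x ≤ p x := by
      intro s x
      rw [(hrep x).2]
      exact le_ciSup (hbags x) s
    constructor
    · -- homogeneity
      intro x l hl
      rw [(hrep x).1, (hrep (l • x)).1]
      have h1 : ∀ i s, (inner ℝ (a i s) (l • x) : ℝ) = l * inner ℝ (a i s) x :=
        fun i s => real_inner_smul_right _ _ _
      calc (⨅ i, ⨆ s, (inner ℝ (a i s) (l • x) : ℝ))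
          = ⨅ i, ⨆ s, l * (inner ℝ (a i s) x : ℝ) := by
            congr 1; funext i; congr 1; funext s; exact h1 i s
        _ = ⨅ i, l * ⨆ s, (inner ℝ (a i s) x : ℝ) := by
            congr 1; funext i; exact (Real.mul_iSup_of_nonneg hl.le _).symm
        _ = l * ⨅ i, ⨆ s, (inner ℝ (a i s) x : ℝ) := (Real.mul_iInf_of_nonneg hl.le _).symm
    · -- continuity
      have hficonv : ∀ i, ConvexOn ℝ Set.univ (fi i) := by
        intro i
        refine ⟨convex_univ, fun x _ y _ α β hα hβ hαβ => ?_⟩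
        refine ciSup_le fun s => ?_
        have : (inner ℝ (a i s) (α • x + β • y) : ℝ)
            = α * inner ℝ (a i s) x + β * inner ℝ (a i s) y := by
          rw [inner_add_right, real_inner_smul_right, real_inner_smul_right]
        rw [this]
        have h1 : (inner ℝ (a i s) x : ℝ) ≤ fi i x := le_ciSup (hba x i) s
        have h2 : (inner ℝ (a i s) y : ℝ) ≤ fi i y := le_ciSup (hba y i) s
        have := mul_le_mul_of_nonneg_left h1 hα
        have := mul_le_mul_of_nonneg_left h2 hβ
        simp only [smul_eq_mul]
        linarith
      have hgsconc : ∀ s, ConcaveOn ℝ Set.univ (gs s) := by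
        intro s
        refine ⟨convex_univ, fun x _ y _ α β hα hβ hαβ => ?_⟩
        refine le_ciInf fun i => ?_
        have : (inner ℝ (a i s) (α • x + β • y) : ℝ)
            = α * inner ℝ (a i s) x + β * inner ℝ (a i s) y := by
          rw [inner_add_right, real_inner_smul_right, real_inner_smul_right]
        rw [this]
        have h1 : gs s x ≤ inner ℝ (a i s) x := ciInf_le (hbb x s) i
        have h2 : gs s y ≤ inner ℝ (a i s) y := ciInf_le (hbb y s) i
        have := mul_le_mul_of_nonneg_left h1 hα
        have := mul_le_mul_of_nonneg_left h2 hβ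
        simp only [smul_eq_mul]
        linarith
      have hficont : ∀ i, Continuous (fi i) := by
        intro i
        have := (hficonv i).continuousOn isOpen_univ
        exact continuousOn_univ.mp this
      have hgscont : ∀ s, Continuous (gs s) := by
        intro s
        have := (hgsconc s).continuousOn isOpen_univ
        exact continuousOn_univ.mp this
      refine continuous_iff_continuousAt.mpr fun x₀ => ?_
      rw [ContinuousAt, Metric.tendsto_nhds]
      intro ε hε
      have hi : ∃ i, fi i x₀ < p x₀ + ε / 2 := by
        apply exists_lt_of_ciInf_lt
        rw [← (hrep x₀).1]
        linarith
      have hs : ∃ s, p x₀ - ε / 2 < gs s x₀ := by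
        apply exists_lt_of_lt_ciSup
        rw [← (hrep x₀).2]
        linarith
      obtain ⟨i, hi⟩ := hi
      obtain ⟨s, hs⟩ := hs
      have h1 : ∀ᶠ x in nhds x₀, fi i x < p x₀ + ε / 2 :=
        ((hficont i).tendsto x₀).eventually_lt_const hi
      have h2 : ∀ᶠ x in nhds x₀, p x₀ - ε / 2 < gs s x :=
        ((hgscont s).tendsto x₀).eventually_const_lt hs
      filter_upwards [h1, h2] with x hx1 hx2
      rw [Real.dist_eq, abs_sub_lt_iff]
      have := hple i x
      have := hpge s x
      have := hple i x₀
      have := hpge s x₀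
      constructor <;> linarith
end

section
/- Let p : ℝⁿ → ℝ be continuous and positively homogeneous, and suppose p = inf_{i∈I} φ_i with each φ_i sublinear and p = sup_{s∈S} ψ_s with each ψ_s superlinear. Then for each (i,s) one can choose a_{is} ∈ ℝⁿ with ψ_s ≤ ⟨a_{is},·⟩ ≤ φ_i pointwise, and any such choice satisfies p(x) = inf_{i∈I} sup_{s∈S} ⟨a_{is},x⟩ = sup_{s∈S} inf_{i∈I} ⟨a_{is},x⟩ for all x ∈ ℝⁿ. -/
open scoped RealInnerProductSpace

lemma sandwich_aux {n : ℕ} (φ ψ : EuclideanSpace ℝ (Fin n) → ℝ)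
    (hφh : ∀ x l, 0 < l → φ (l • x) = l * φ x) (hφc : ConvexOn ℝ Set.univ φ)
    (hψh : ∀ x l, 0 < l → ψ (l • x) = l * ψ x) (hψc : ConcaveOn ℝ Set.univ ψ)
    (hle : ∀ x, ψ x ≤ φ x) :
    ∃ a : EuclideanSpace ℝ (Fin n), ∀ x, ψ x ≤ ⟪a, x⟫ ∧ ⟪a, x⟫ ≤ φ x := by
  have hφ0 : φ 0 = 0 := by
    have := hφh 0 2 (by norm_num); rw [smul_zero] at this; linarith
  have hψ0 : ψ 0 = 0 := by
    have := hψh 0 2 (by norm_num); rw [smul_zero] at this; linarith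
  have hφadd : ∀ x y, φ (x + y) ≤ φ x + φ y := by
    intro x y
    have h := hφc.2 (Set.mem_univ x) (Set.mem_univ y) (by norm_num : (0:ℝ) ≤ (1:ℝ)/2)
      (by norm_num : (0:ℝ) ≤ (1:ℝ)/2) (by norm_num)
    simp only [smul_eq_mul] at h
    have h2 := hφh ((1/2 : ℝ) • x + (1/2 : ℝ) • y) 2 (by norm_num)
    have hx : (2:ℝ) • ((1/2 : ℝ) • x + (1/2 : ℝ) • y) = x + y := by
      rw [smul_add, smul_smul, smul_smul]; norm_num
    rw [hx] at h2
    rw [h2]; linarith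
  have hψadd : ∀ x y, ψ x + ψ y ≤ ψ (x + y) := by
    intro x y
    have h := hψc.2 (Set.mem_univ x) (Set.mem_univ y) (by norm_num : (0:ℝ) ≤ (1:ℝ)/2)
      (by norm_num : (0:ℝ) ≤ (1:ℝ)/2) (by norm_num)
    simp only [smul_eq_mul] at h
    have h2 := hψh ((1/2 : ℝ) • x + (1/2 : ℝ) • y) 2 (by norm_num)
    have hx : (2:ℝ) • ((1/2 : ℝ) • x + (1/2 : ℝ) • y) = x + y := by
      rw [smul_add, smul_smul, smul_smul]; norm_num
    rw [hx] at h2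
    rw [h2]; linarith
  set q : EuclideanSpace ℝ (Fin n) → ℝ := fun x => ⨅ y, (φ (x + y) - ψ y) with hq
  have hlb : ∀ x y, -φ (-x) ≤ φ (x + y) - ψ y := by
    intro x y
    have h1 : φ y ≤ φ (x + y) + φ (-x) := by
      have := hφadd (x + y) (-x)
      simpa [add_comm, add_assoc, add_left_comm] using this
    have h2 := hle y
    linarith
  have hbdd : ∀ x, BddBelow (Set.range fun y => φ (x + y) - ψ y) :=
    fun x => ⟨-φ (-x), by rintro _ ⟨y, rfl⟩; exact hlb x y⟩
  have hq_le : ∀ x y, q x ≤ φ (x + y) - ψ y := fun x y => ciInf_le (hbdd x) y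
  have hq_lb : ∀ x, -φ (-x) ≤ q x := fun x => le_ciInf (hlb x)
  have hq_hom_le : ∀ (l : ℝ), 0 < l → ∀ x, q (l • x) ≤ l * q x := by
    intro l hl x
    rw [mul_comm, ← div_le_iff₀ hl]
    refine le_ciInf fun y => ?_
    rw [div_le_iff₀ hl, mul_comm]
    calc q (l • x) ≤ φ (l • x + l • y) - ψ (l • y) := hq_le _ _
      _ = l * (φ (x + y) - ψ y) := by
          rw [← smul_add, hφh _ _ hl, hψh _ _ hl]; ring
  have hq_hom : ∀ (l : ℝ), 0 < l → ∀ x, q (l • x) = l * q x := by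
    intro l hl x
    refine le_antisymm (hq_hom_le l hl x) ?_
    have h := hq_hom_le l⁻¹ (inv_pos.mpr hl) (l • x)
    rw [smul_smul, inv_mul_cancel₀ hl.ne', one_smul] at h
    calc l * q x ≤ l * (l⁻¹ * q (l • x)) := by nlinarith
      _ = q (l • x) := by field_simp
  have hq_add : ∀ x y, q (x + y) ≤ q x + q y := by
    intro x y
    rw [← sub_le_iff_le_add']
    refine le_ciInf fun z => ?_
    rw [sub_le_iff_le_add']
    rw [← sub_le_iff_le_add]
    refine le_ciInf fun w => ?_
    rw [sub_le_iff_le_add]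
    calc q (x + y) ≤ φ (x + y + (z + w)) - ψ (z + w) := hq_le _ _
      _ ≤ (φ (x + w) + φ (y + z)) - (ψ z + ψ w) := by
          have h1 : φ (x + y + (z + w)) ≤ φ (x + w) + φ (y + z) := by
            have := hφadd (x + w) (y + z)
            simpa [add_comm, add_assoc, add_left_comm] using this
          have h2 := hψadd z w
          linarith
      _ = (φ (x + w) - ψ w) + (φ (y + z) - ψ z) := by ring
  -- apply Hahn-Banach
  obtain ⟨g, -, hg⟩ := exists_extension_of_le_sublinear
    (⟨⊥, 0⟩ : (EuclideanSpace ℝ (Fin n)) →ₗ.[ℝ] ℝ) q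
    (fun c hc x => hq_hom c hc x) hq_add
    (by
      rintro ⟨x, hx⟩
      simp only [Submodule.mem_bot] at hx
      subst hx
      show (0 : ℝ) ≤ q 0
      have := hq_lb 0
      rw [neg_zero, hφ0, neg_zero] at this
      exact this)
  set a := (InnerProductSpace.toDual ℝ (EuclideanSpace ℝ (Fin n))).symm
    (LinearMap.toContinuousLinearMap g) with ha
  have hinner : ∀ x, ⟪a, x⟫ = g x := fun x =>
    InnerProductSpace.toDual_symm_apply
  refine ⟨a, fun x => ⟨?_, ?_⟩⟩
  · rw [hinner]
    have h1 : g (-x) ≤ q (-x) := hg (-x)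
    have h2 : q (-x) ≤ φ (-x + x) - ψ x := hq_le _ _
    rw [neg_add_cancel, hφ0] at h2
    have h3 : g (-x) = -g x := by rw [map_neg]
    linarith
  · rw [hinner]
    calc g x ≤ q x := hg x
      _ ≤ φ (x + 0) - ψ 0 := hq_le x 0
      _ = φ x := by rw [add_zero, hψ0]; ring

theorem stmt_11 {n : ℕ} {I S : Type} [Nonempty I] [Nonempty S]
    (p : EuclideanSpace ℝ (Fin n) → ℝ)
    (hph : ∀ (x : EuclideanSpace ℝ (Fin n)) (l : ℝ), 0 < l → p (l • x) = l * p x)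
    (hcont : Continuous p)
    (φ : I → EuclideanSpace ℝ (Fin n) → ℝ)
    (hφ : ∀ i, (∀ (x : EuclideanSpace ℝ (Fin n)) (l : ℝ), 0 < l → φ i (l • x) = l * φ i x)
      ∧ ConvexOn ℝ Set.univ (φ i))
    (ψ : S → EuclideanSpace ℝ (Fin n) → ℝ)
    (hψ : ∀ s, (∀ (x : EuclideanSpace ℝ (Fin n)) (l : ℝ), 0 < l → ψ s (l • x) = l * ψ s x)
      ∧ ConcaveOn ℝ Set.univ (ψ s))
    (hbddI : ∀ x, BddBelow (Set.range fun i : I => φ i x))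
    (hbddS : ∀ x, BddAbove (Set.range fun s : S => ψ s x))
    (hinf : ∀ x, p x = ⨅ i : I, φ i x)
    (hsup : ∀ x, p x = ⨆ s : S, ψ s x) :
    (∃ a : I → S → EuclideanSpace ℝ (Fin n),
      ∀ (i : I) (s : S) (x : EuclideanSpace ℝ (Fin n)),
        ψ s x ≤ (inner ℝ (a i s) x : ℝ) ∧ (inner ℝ (a i s) x : ℝ) ≤ φ i x) ∧
    (∀ a : I → S → EuclideanSpace ℝ (Fin n),
      (∀ (i : I) (s : S) (x : EuclideanSpace ℝ (Fin n)),
        ψ s x ≤ (inner ℝ (a i s) x : ℝ) ∧ (inner ℝ (a i s) x : ℝ) ≤ φ i x) →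
      ∀ x : EuclideanSpace ℝ (Fin n),
        (p x = ⨅ i : I, ⨆ s : S, (inner ℝ (a i s) x : ℝ)) ∧
        (p x = ⨆ s : S, ⨅ i : I, (inner ℝ (a i s) x : ℝ))) := by
  have hpφ : ∀ i x, p x ≤ φ i x := fun i x => (hinf x) ▸ ciInf_le (hbddI x) i
  have hψp : ∀ s x, ψ s x ≤ p x := fun s x => (hsup x) ▸ le_ciSup (hbddS x) s
  constructor
  · have hex : ∀ i s, ∃ a : EuclideanSpace ℝ (Fin n), ∀ x, ψ s x ≤ ⟪a, x⟫ ∧ ⟪a, x⟫ ≤ φ i x :=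
      fun i s => sandwich_aux (φ i) (ψ s) (hφ i).1 (hφ i).2 (hψ s).1 (hψ s).2
        (fun x => (hψp s x).trans (hpφ i x))
    choose a0 ha0 using hex
    exact ⟨a0, fun i s x => ha0 i s x⟩
  · intro a ha x
    have hbA : ∀ i, BddAbove (Set.range fun s : S => (inner ℝ (a i s) x : ℝ)) :=
      fun i => ⟨φ i x, by rintro _ ⟨s, rfl⟩; exact (ha i s x).2⟩
    have hbB : ∀ s, BddBelow (Set.range fun i : I => (inner ℝ (a i s) x : ℝ)) :=
      fun s => ⟨ψ s x, by rintro _ ⟨i, rfl⟩; exact (ha i s x).1⟩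
    constructor
    · refine le_antisymm (le_ciInf fun i => ?_) ?_
      · rw [hsup x]
        exact ciSup_le fun s => (ha i s x).1.trans (le_ciSup (hbA i) s)
      · have hlb : BddBelow (Set.range fun i : I => ⨆ s, (inner ℝ (a i s) x : ℝ)) := by
          refine ⟨p x, ?_⟩
          rintro _ ⟨i, rfl⟩
          rw [hsup x]
          exact ciSup_le fun s => (ha i s x).1.trans (le_ciSup (hbA i) s)
        rw [hinf x]
        exact ciInf_mono hlb fun i => ciSup_le fun s => (ha i s x).2
    · refine le_antisymm ?_ (ciSup_le fun s => ?_)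
      · have hub : BddAbove (Set.range fun s : S => ⨅ i, (inner ℝ (a i s) x : ℝ)) := by
          refine ⟨p x, ?_⟩
          rintro _ ⟨s, rfl⟩
          rw [hinf x]
          exact ciInf_mono (hbB s) fun i => (ha i s x).2
        rw [hsup x]
        exact ciSup_mono hub fun s => le_ciInf fun i => (ha i s x).1
      · rw [hinf x]
        exact ciInf_mono (hbB s) fun i => (ha i s x).2
end

section
/- A positively homogeneous function p : ℝⁿ → ℝ is Lipschitz continuous with |p(x)| ≤ M‖x‖ structure if and only if there exists a constant M > 0 and a family Φ of sublinear functions, uniformly bounded by M (i.e. |φ(x)| ≤ M‖x‖ for all φ ∈ Φ and x), such that p(x) = inf_{φ∈Φ} φ(x) for all x. -/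
open scoped RealInnerProductSpace

noncomputable def phiAux {n : ℕ} (p : EuclideanSpace ℝ (Fin n) → ℝ) (C : ℝ)
    (u : EuclideanSpace ℝ (Fin n)) (x : EuclideanSpace ℝ (Fin n)) : ℝ :=
  p u * (inner ℝ u (x) : ℝ) + C * ‖x - (inner ℝ u (x) : ℝ) • u‖ + C * (|(inner ℝ u (x) : ℝ)| - (inner ℝ u (x) : ℝ))

lemma phiAux_homog {n : ℕ} (p : EuclideanSpace ℝ (Fin n) → ℝ) (C : ℝ)
    (u x : EuclideanSpace ℝ (Fin n)) (l : ℝ) (hl : 0 < l) :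
    phiAux p C u (l • x) = l * phiAux p C u x := by
  have h1 : (inner ℝ u (l • x) : ℝ) = l * (inner ℝ u (x) : ℝ) := real_inner_smul_right u x l
  have h2 : (l • x : EuclideanSpace ℝ (Fin n)) - (l * (inner ℝ u (x) : ℝ)) • u
      = l • (x - (inner ℝ u (x) : ℝ) • u) := by
    rw [smul_sub, mul_smul]
  rw [phiAux, phiAux, h1, h2, norm_smul, Real.norm_eq_abs, abs_mul,
    abs_of_pos hl]
  ring

lemma phiAux_convex {n : ℕ} (p : EuclideanSpace ℝ (Fin n) → ℝ) (C : ℝ) (hC : 0 ≤ C)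
    (u : EuclideanSpace ℝ (Fin n)) :
    ConvexOn ℝ Set.univ (phiAux p C u) := by
  refine ⟨convex_univ, fun x _ y _ a b ha hb hab => ?_⟩
  have h1 : (inner ℝ u (a • x + b • y) : ℝ) = a * (inner ℝ u (x) : ℝ) + b * (inner ℝ u (y) : ℝ) := by
    rw [inner_add_right, real_inner_smul_right, real_inner_smul_right]
  have h2 : (a • x + b • y : EuclideanSpace ℝ (Fin n))
      - (a * (inner ℝ u (x) : ℝ) + b * (inner ℝ u (y) : ℝ)) • u
      = a • (x - (inner ℝ u (x) : ℝ) • u) + b • (y - (inner ℝ u (y) : ℝ) • u) := by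
    rw [add_smul, mul_smul, mul_smul, smul_sub, smul_sub]
    abel
  have h3 : ‖(a • x + b • y : EuclideanSpace ℝ (Fin n))
      - (a * (inner ℝ u (x) : ℝ) + b * (inner ℝ u (y) : ℝ)) • u‖
      ≤ a * ‖x - (inner ℝ u (x) : ℝ) • u‖ + b * ‖y - (inner ℝ u (y) : ℝ) • u‖ := by
    rw [h2]
    refine (norm_add_le _ _).trans ?_
    rw [norm_smul, norm_smul, Real.norm_eq_abs, Real.norm_eq_abs,
      abs_of_nonneg ha, abs_of_nonneg hb]
  have h4 : |a * (inner ℝ u (x) : ℝ) + b * (inner ℝ u (y) : ℝ)| ≤ a * |(inner ℝ u (x) : ℝ)| + b * |(inner ℝ u (y) : ℝ)| := by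
    refine (abs_add_le _ _).trans ?_
    rw [abs_mul, abs_mul, abs_of_nonneg ha, abs_of_nonneg hb]
  simp only [phiAux, h1, smul_eq_mul]
  nlinarith [mul_le_mul_of_nonneg_left h3 hC, mul_le_mul_of_nonneg_left h4 hC]

lemma phiAux_bound {n : ℕ} (p : EuclideanSpace ℝ (Fin n) → ℝ) (C : ℝ) (hC : 0 ≤ C)
    (u : EuclideanSpace ℝ (Fin n)) (hu : ‖u‖ = 1) (hpu : |p u| ≤ C)
    (x : EuclideanSpace ℝ (Fin n)) : |phiAux p C u x| ≤ (5 * C) * ‖x‖ := by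
  have ht : |(inner ℝ u (x) : ℝ)| ≤ ‖x‖ := by
    have := abs_real_inner_le_norm u x
    rwa [hu, one_mul] at this
  have hw : ‖x - (inner ℝ u (x) : ℝ) • u‖ ≤ 2 * ‖x‖ := by
    refine (norm_sub_le _ _).trans ?_
    rw [norm_smul, Real.norm_eq_abs, hu, mul_one]
    linarith
  have h1 : |p u * (inner ℝ u (x) : ℝ)| ≤ C * ‖x‖ := by
    rw [abs_mul]
    exact mul_le_mul hpu ht (abs_nonneg _) hC
  have h2 : |C * ‖x - (inner ℝ u (x) : ℝ) • u‖| ≤ C * (2 * ‖x‖) := by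
    rw [abs_mul, abs_of_nonneg hC, abs_of_nonneg (norm_nonneg _)]
    exact mul_le_mul_of_nonneg_left hw hC
  have h3 : |C * (|(inner ℝ u (x) : ℝ)| - (inner ℝ u (x) : ℝ))| ≤ C * (2 * ‖x‖) := by
    rw [abs_mul, abs_of_nonneg hC]
    have h0 : (0:ℝ) ≤ |(inner ℝ u (x) : ℝ)| - (inner ℝ u (x) : ℝ) := by
      have := le_abs_self ((inner ℝ u (x) : ℝ)); linarith
    rw [abs_of_nonneg h0]
    have h5 := neg_abs_le ((inner ℝ u (x) : ℝ))
    have h6 := abs_le.mp ht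
    refine mul_le_mul_of_nonneg_left ?_ hC
    linarith [h6.1, h6.2]
  rw [phiAux]
  have hA := abs_add_le (p u * (inner ℝ u (x) : ℝ)) (C * ‖x - (inner ℝ u (x) : ℝ) • u‖)
  have hB := abs_add_le (p u * (inner ℝ u (x) : ℝ) + C * ‖x - (inner ℝ u (x) : ℝ) • u‖)
    (C * (|(inner ℝ u (x) : ℝ)| - (inner ℝ u (x) : ℝ)))
  linarith

lemma phiAux_ge {n : ℕ} (p : EuclideanSpace ℝ (Fin n) → ℝ) (C : ℝ) (hC : 0 ≤ C)
    (hph : ∀ (x : EuclideanSpace ℝ (Fin n)) (l : ℝ), 0 < l → p (l • x) = l * p x)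
    (hp0 : p 0 = 0)
    (hpb : ∀ x, |p x| ≤ C * ‖x‖)
    (hlip : ∀ x y, p x ≤ p y + C * ‖x - y‖)
    (u : EuclideanSpace ℝ (Fin n)) (hu : ‖u‖ = 1)
    (x : EuclideanSpace ℝ (Fin n)) : p x ≤ phiAux p C u x := by
  set t := (inner ℝ u (x) : ℝ) with htdef
  have hkey : p x ≤ p (t • u) + C * ‖x - t • u‖ := hlip x (t • u)
  rcases lt_trichotomy t 0 with htneg | htz | htpos
  · have h1 : p (t • u) = (-t) * p (-u) := by
      have : (t • u : EuclideanSpace ℝ (Fin n)) = (-t) • (-u) := by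
        rw [smul_neg, neg_smul, neg_neg]
      rw [this, hph (-u) (-t) (by linarith)]
    have h2 : |p (-u)| ≤ C := by
      have := hpb (-u)
      rwa [norm_neg, hu, mul_one] at this
    have h3 : |p u| ≤ C := by
      have := hpb u
      rwa [hu, mul_one] at this
    rw [h1] at hkey
    rw [phiAux, ← htdef, abs_of_neg htneg]
    rcases abs_le.mp h2 with ⟨_, h2b⟩
    rcases abs_le.mp h3 with ⟨h3a, _⟩
    nlinarith
  · rw [htz] at hkey
    rw [zero_smul, hp0] at hkey
    rw [phiAux, ← htdef, htz]
    simp only [zero_smul, sub_zero, abs_zero, mul_zero, zero_mul, zero_add, add_zero,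
      sub_self] at hkey ⊢
    linarith
  · have h1 : p (t • u) = t * p u := hph u t htpos
    rw [phiAux, ← htdef, abs_of_pos htpos]
    rw [h1] at hkey
    have : t * p u = p u * t := by ring
    linarith [hkey]

lemma phiAux_self {n : ℕ} (p : EuclideanSpace ℝ (Fin n) → ℝ) (C : ℝ)
    (hph : ∀ (x : EuclideanSpace ℝ (Fin n)) (l : ℝ), 0 < l → p (l • x) = l * p x)
    (x : EuclideanSpace ℝ (Fin n)) (hx : x ≠ 0) :
    phiAux p C (‖x‖⁻¹ • x) x = p x := by
  have hxn : (0 : ℝ) < ‖x‖ := norm_pos_iff.mpr hx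
  have ht : (inner ℝ (‖x‖⁻¹ • x : EuclideanSpace ℝ (Fin n)) (x) : ℝ) = ‖x‖ := by
    rw [real_inner_smul_left, real_inner_self_eq_norm_sq]
    field_simp
  have hsm : (‖x‖ : ℝ) • (‖x‖⁻¹ • x : EuclideanSpace ℝ (Fin n)) = x := by
    rw [smul_smul, mul_inv_cancel₀ (ne_of_gt hxn), one_smul]
  have hpu : p (‖x‖⁻¹ • x) = ‖x‖⁻¹ * p x := hph x ‖x‖⁻¹ (by positivity)
  rw [phiAux, ht, hsm, sub_self, norm_zero, abs_of_pos hxn, sub_self]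
  simp only [mul_zero, add_zero, zero_mul]
  rw [hpu]
  field_simp

theorem stmt_12 {n : ℕ} (p : EuclideanSpace ℝ (Fin n) → ℝ)
    (hph : ∀ (x : EuclideanSpace ℝ (Fin n)) (l : ℝ), 0 < l → p (l • x) = l * p x) :
    (∃ K : NNReal, LipschitzWith K p)
    ↔
    ∃ M : ℝ, 0 < M ∧
      ∃ Φ : Set (EuclideanSpace ℝ (Fin n) → ℝ), Φ.Nonempty ∧
        (∀ φ ∈ Φ,
          (∀ (x : EuclideanSpace ℝ (Fin n)) (l : ℝ), 0 < l → φ (l • x) = l * φ x) ∧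
          ConvexOn ℝ Set.univ φ ∧
          (∀ x : EuclideanSpace ℝ (Fin n), |φ x| ≤ M * ‖x‖)) ∧
        (∀ x, p x = ⨅ φ : Φ, φ.1 x) := by
  constructor
  · rintro ⟨K, hK⟩
    set C : ℝ := (K : ℝ) with hCdef
    have hC0 : (0 : ℝ) ≤ C := K.2
    set M : ℝ := 5 * C + 1 with hMdef
    have hM0 : (0 : ℝ) < M := by positivity
    have hp0 : p 0 = 0 := by
      have h := hph 0 2 (by norm_num)
      rw [smul_zero] at h
      linarith
    have hpb : ∀ x, |p x| ≤ C * ‖x‖ := by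
      intro x
      have h := hK.dist_le_mul x 0
      rw [Real.dist_eq, hp0, sub_zero, dist_zero_right] at h
      exact h
    have hlip : ∀ x y, p x ≤ p y + C * ‖x - y‖ := by
      intro x y
      have h := hK.dist_le_mul x y
      rw [Real.dist_eq, dist_eq_norm] at h
      have := abs_le.mp h
      linarith [this.2]
    -- the family
    set Φ : Set (EuclideanSpace ℝ (Fin n) → ℝ) :=
      {φ | (∀ (x : EuclideanSpace ℝ (Fin n)) (l : ℝ), 0 < l → φ (l • x) = l * φ x) ∧
        ConvexOn ℝ Set.univ φ ∧
        (∀ x, |φ x| ≤ M * ‖x‖) ∧ (∀ x, p x ≤ φ x)} with hΦdef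
    have hpsi : (fun x : EuclideanSpace ℝ (Fin n) => M * ‖x‖) ∈ Φ := by
      refine ⟨?_, ?_, ?_, ?_⟩
      · intro x l hl
        show M * ‖l • x‖ = l * (M * ‖x‖)
        rw [norm_smul, Real.norm_eq_abs, abs_of_pos hl]; ring
      · exact (convexOn_univ_norm).smul (le_of_lt hM0)
      · intro x
        rw [abs_of_nonneg (by positivity)]
      · intro x
        calc p x ≤ |p x| := le_abs_self _
          _ ≤ C * ‖x‖ := hpb x
          _ ≤ M * ‖x‖ := by
            have := norm_nonneg x
            nlinarith
    have hphi : ∀ u : EuclideanSpace ℝ (Fin n), ‖u‖ = 1 → phiAux p C u ∈ Φ := by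
      intro u hu
      have hpu : |p u| ≤ C := by
        have := hpb u; rwa [hu, mul_one] at this
      refine ⟨fun x l hl => phiAux_homog p C u x l hl,
        phiAux_convex p C hC0 u, ?_, phiAux_ge p C hC0 hph hp0 hpb hlip u hu⟩
      intro x
      calc |phiAux p C u x| ≤ (5 * C) * ‖x‖ := phiAux_bound p C hC0 u hu hpu x
        _ ≤ M * ‖x‖ := by
          have := norm_nonneg x
          nlinarith
    have hbdd : ∀ x : EuclideanSpace ℝ (Fin n),
        BddBelow (Set.range fun φ : Φ => φ.1 x) := by
      intro x
      refine ⟨-(M * ‖x‖), ?_⟩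
      rintro r ⟨φ, rfl⟩
      have := (abs_le.mp (φ.2.2.2.1 x)).1
      linarith
    haveI hne : Nonempty ↑Φ := ⟨⟨_, hpsi⟩⟩
    refine ⟨M, hM0, Φ, ⟨_, hpsi⟩, ?_, ?_⟩
    · intro φ hφ
      exact ⟨hφ.1, hφ.2.1, hφ.2.2.1⟩
    · intro x
      refine le_antisymm (le_ciInf fun φ => φ.2.2.2.2 x) ?_
      by_cases hx : x = 0
      · subst hx
        have h0 : (fun x : EuclideanSpace ℝ (Fin n) => M * ‖x‖) (0 : EuclideanSpace ℝ (Fin n)) = p 0 := by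
          simp [hp0]
        calc (⨅ φ : Φ, φ.1 (0 : EuclideanSpace ℝ (Fin n)))
            ≤ (fun x : EuclideanSpace ℝ (Fin n) => M * ‖x‖) (0 : EuclideanSpace ℝ (Fin n)) :=
              ciInf_le (hbdd 0) (⟨_, hpsi⟩ : Φ)
          _ = p 0 := h0
      · have hu : ‖(‖x‖⁻¹ • x : EuclideanSpace ℝ (Fin n))‖ = 1 := by
          rw [norm_smul, Real.norm_eq_abs, abs_of_pos (inv_pos.mpr (norm_pos_iff.mpr hx)),
            inv_mul_cancel₀ (norm_ne_zero_iff.mpr hx)]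
        calc (⨅ φ : Φ, φ.1 x) ≤ phiAux p C (‖x‖⁻¹ • x) x :=
              ciInf_le (hbdd x) (⟨_, hphi _ hu⟩ : Φ)
          _ = p x := phiAux_self p C hph x hx
  · rintro ⟨M, hM0, Φ, ⟨φ₀, hφ₀⟩, hprop, hinf⟩
    haveI hne : Nonempty ↑Φ := ⟨⟨φ₀, hφ₀⟩⟩
    have hbdd : ∀ x : EuclideanSpace ℝ (Fin n),
        BddBelow (Set.range fun φ : Φ => φ.1 x) := by
      intro x
      refine ⟨-(M * ‖x‖), ?_⟩
      rintro r ⟨φ, rfl⟩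
      have := (abs_le.mp ((hprop φ.1 φ.2).2.2 x)).1
      linarith
    have hsub : ∀ φ ∈ Φ, ∀ x y : EuclideanSpace ℝ (Fin n),
        φ (x + y) ≤ φ x + φ y := by
      intro φ hφ x y
      obtain ⟨hhom, hconv, _⟩ := hprop φ hφ
      have h := hconv.2 (Set.mem_univ x) (Set.mem_univ y)
        (by norm_num : (0:ℝ) ≤ 1/2) (by norm_num : (0:ℝ) ≤ 1/2) (by norm_num)
      have h2 : ((1:ℝ)/2) • x + ((1:ℝ)/2) • y
          = ((1:ℝ)/2) • (x + y) := by rw [smul_add]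
      rw [h2, hhom (x + y) (1/2) (by norm_num)] at h
      simp only [smul_eq_mul] at h
      linarith
    have hlip : ∀ x y : EuclideanSpace ℝ (Fin n), p x ≤ p y + M * ‖x - y‖ := by
      intro x y
      rw [hinf x, hinf y]
      have key : ∀ φ : Φ, (⨅ ψ : Φ, ψ.1 x) ≤ φ.1 y + M * ‖x - y‖ := by
        intro φ
        have h := hsub φ.1 φ.2 y (x - y)
        rw [add_sub_cancel] at h
        have h2 := (abs_le.mp ((hprop φ.1 φ.2).2.2 (x - y))).2
        have h3 : (⨅ ψ : Φ, ψ.1 x) ≤ φ.1 x := ciInf_le (hbdd x) φ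
        linarith
      have hfin : (⨅ ψ : Φ, ψ.1 x) - M * ‖x - y‖ ≤ ⨅ ψ : Φ, ψ.1 y :=
        le_ciInf fun φ => by linarith [key φ]
      linarith
    refine ⟨⟨M, le_of_lt hM0⟩, ?_⟩
    refine LipschitzWith.of_dist_le_mul fun x y => ?_
    rw [Real.dist_eq, dist_eq_norm]
    have h1 := hlip x y
    have h2 := hlip y x
    rw [abs_le]
    constructor
    · have : ‖y - x‖ = ‖x - y‖ := norm_sub_rev y x
      rw [this] at h2
      change -(M * ‖x - y‖) ≤ p x - p y
      linarith
    · change p x - p y ≤ M * ‖x - y‖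
      linarith
end

section
/- A function p : ℝⁿ → ℝ is positively homogeneous and Lipschitz continuous on ℝⁿ if and only if there exist M > 0 and a two-index family {a_{is} ∈ ℝⁿ : i∈I, s∈S} satisfying, for every x ∈ ℝⁿ: -M‖x‖ < inf_{i∈I} ⟨a_{is},x⟩ for all s ∈ S and sup_{s∈S} ⟨a_{is},x⟩ < M‖x‖ for all i ∈ I (for x ≠ 0), together with p(x) = inf_{i∈I} sup_{s∈S} ⟨a_{is},x⟩ = sup_{s∈S} inf_{i∈I} ⟨a_{is},x⟩. -/
set_option maxHeartbeats 1000000 in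
private lemma stmt13_star {n : ℕ} (p : EuclideanSpace ℝ (Fin n) → ℝ) (K : ℝ) (hK : 0 ≤ K)
    (hp0 : p 0 = 0)
    (habs : ∀ z, |p z| ≤ K * ‖z‖)
    (hdiff : ∀ z w, p z - p w ≤ K * ‖z - w‖)
    (hscale : ∀ l : ℝ, 0 ≤ l → ∀ z, p (l • z) = l * p z)
    (y x : EuclideanSpace ℝ (Fin n)) :
    ∃ u : EuclideanSpace ℝ (Fin n),
      ‖u‖ ≤ K + 1 ∧ p y ≤ inner ℝ u y ∧ (inner ℝ u x : ℝ) ≤ p x := by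
  have hM : (0:ℝ) < K + 1 := by linarith
  by_cases hy : y = 0
  · subst hy
    by_cases hx : x = 0
    · subst hx
      exact ⟨0, by simp; linarith, by simp [hp0], by simp [hp0]⟩
    · have hnx : 0 < ‖x‖ := norm_pos_iff.2 hx
      refine ⟨(-(K+1)/‖x‖) • x, ?_, ?_, ?_⟩
      · rw [norm_smul]
        rw [Real.norm_eq_abs, abs_div, abs_neg, abs_of_pos hM, abs_of_pos hnx,
          div_mul_cancel₀ _ hnx.ne']
      · simp [hp0]
      · have h1 : (inner ℝ ((-(K+1)/‖x‖) • x) x : ℝ) = -((K+1) * ‖x‖) := by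
          rw [real_inner_smul_left, real_inner_self_eq_norm_sq]
          field_simp
        rw [h1]
        have h2 := (abs_le.1 (habs x)).1
        linarith [norm_nonneg x]
  · have hny' : 0 < ‖y‖ := norm_pos_iff.2 hy
    obtain ⟨ny, hnydef⟩ : ∃ t : ℝ, t = ‖y‖ := ⟨_, rfl⟩
    have hny : 0 < ny := hnydef ▸ hny'
    obtain ⟨a, hadef⟩ : ∃ t : ℝ, t = p y / ny := ⟨_, rfl⟩
    have hpy : p y = a * ny := by rw [hadef]; field_simp
    have ha : |a| ≤ K := by
      rw [hadef, abs_div, abs_of_pos hny, div_le_iff₀ hny, hnydef]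
      exact habs y
    have haK : a^2 ≤ K^2 := by
      have e1 := sq_abs a
      have e2 := mul_le_mul_of_nonneg_left ha (abs_nonneg a)
      have e3 := mul_le_mul_of_nonneg_right ha hK
      linarith [e1, e2, e3]
    obtain ⟨c, hcdef⟩ : ∃ t : ℝ, t = (inner ℝ y x : ℝ) / ny := ⟨_, rfl⟩
    have hiyx : (inner ℝ y x : ℝ) = c * ny := by rw [hcdef]; field_simp
    obtain ⟨v, hvdef⟩ : ∃ w : EuclideanSpace ℝ (Fin n), w = x - (c/ny) • y := ⟨_, rfl⟩
    have hyv : (inner ℝ y v : ℝ) = 0 := by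
      rw [hvdef, inner_sub_right, real_inner_smul_right, real_inner_self_eq_norm_sq, hiyx,
        ← hnydef]
      field_simp; ring
    have hvy : (inner ℝ v y : ℝ) = 0 := by rw [real_inner_comm]; exact hyv
    have hxd : x = (c/ny) • y + v := by rw [hvdef]; abel
    obtain ⟨s, hsdef⟩ : ∃ t : ℝ, t = ‖v‖ := ⟨_, rfl⟩
    have hs0 : 0 ≤ s := hsdef ▸ norm_nonneg v
    have hx2 : ‖x‖^2 = c^2 + s^2 := by
      rw [hxd, norm_add_sq_real, real_inner_smul_left, hyv, norm_smul, Real.norm_eq_abs,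
        mul_pow, sq_abs, ← hnydef, ← hsdef]
      field_simp; ring
    have hivx : (inner ℝ v x : ℝ) = s^2 := by
      rw [hxd, inner_add_right, real_inner_smul_right, hvy, real_inner_self_eq_norm_sq,
        ← hsdef]
      ring
    by_cases hv : v = 0
    · have hxc : x = (c/ny) • y := by rw [hxd, hv, add_zero]
      have hnx : ‖x‖ = |c| := by
        rw [hxc, norm_smul, Real.norm_eq_abs, abs_div, abs_of_pos hny, ← hnydef]
        field_simp
      rcases lt_trichotomy c 0 with hc | hc | hc
      · refine ⟨((K+1)/ny) • y, ?_, ?_, ?_⟩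
        · rw [norm_smul, Real.norm_eq_abs, abs_div, abs_of_pos hM, abs_of_pos hny, ← hnydef,
            div_mul_cancel₀ _ hny.ne']
        · rw [real_inner_smul_left, real_inner_self_eq_norm_sq, ← hnydef]
          have h1 : p y ≤ K * ny := by rw [hnydef]; exact (abs_le.1 (habs y)).2
          have h2 : ((K+1)/ny) * ny^2 = (K+1) * ny := by field_simp
          rw [h2]; linarith
        · rw [real_inner_smul_left, hiyx]
          have h2 : ((K+1)/ny) * (c * ny) = (K+1) * c := by field_simp
          rw [h2]
          have h3 := (abs_le.1 (habs x)).1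
          rw [hnx, abs_of_neg hc] at h3
          linarith
      · have hx0 : x = 0 := by rw [hxc, hc]; simp
        refine ⟨(a/ny) • y, ?_, ?_, ?_⟩
        · rw [norm_smul, Real.norm_eq_abs, abs_div, abs_of_pos hny, ← hnydef,
            div_mul_cancel₀ _ hny.ne']
          linarith [ha]
        · rw [real_inner_smul_left, real_inner_self_eq_norm_sq, ← hnydef]
          have h2 : (a/ny) * ny^2 = a * ny := by field_simp
          rw [h2, ← hpy]
        · rw [hx0, inner_zero_right, hp0]
      · refine ⟨(a/ny) • y, ?_, ?_, ?_⟩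
        · rw [norm_smul, Real.norm_eq_abs, abs_div, abs_of_pos hny, ← hnydef,
            div_mul_cancel₀ _ hny.ne']
          linarith [ha]
        · rw [real_inner_smul_left, real_inner_self_eq_norm_sq, ← hnydef]
          have h2 : (a/ny) * ny^2 = a * ny := by field_simp
          rw [h2, ← hpy]
        · rw [real_inner_smul_left, hiyx]
          have h2 : (a/ny) * (c * ny) = a * c := by field_simp
          rw [h2, hxc, hscale (c/ny) (by positivity) y, hpy]
          have h3 : (c/ny) * (a * ny) = a * c := by field_simp
          rw [h3]
    · have hs : 0 < s := hsdef ▸ norm_pos_iff.2 hv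
      obtain ⟨b, hbdef⟩ : ∃ t : ℝ, t = Real.sqrt ((K+1)^2 - a^2) := ⟨_, rfl⟩
      have hb2 : b^2 = (K+1)^2 - a^2 := by
        rw [hbdef, Real.sq_sqrt (by linarith [haK])]
      have hb : 0 < b := by
        rw [hbdef]
        exact Real.sqrt_pos.2 (by linarith [haK])
      by_cases hcl : b*c + s*a < 0
      · have hxne : x ≠ 0 := by
          intro h0
          rw [h0] at hx2
          simp only [norm_zero] at hx2
          linarith [mul_pos hs hs, sq_nonneg c, hx2]
        have hnx : 0 < ‖x‖ := norm_pos_iff.2 hxne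
        refine ⟨(-(K+1)/‖x‖) • x, ?_, ?_, ?_⟩
        · rw [norm_smul, Real.norm_eq_abs, abs_div, abs_neg, abs_of_pos hM, abs_of_pos hnx,
            div_mul_cancel₀ _ hnx.ne']
        · have h1 : (inner ℝ ((-(K+1)/‖x‖) • x) y : ℝ) = -((K+1) * (c * ny)) / ‖x‖ := by
            rw [real_inner_smul_left, real_inner_comm, hiyx]
            ring
          rw [h1, hpy, le_div_iff₀ hnx]
          have key : (K+1) * c + a * ‖x‖ ≤ 0 := by
            rcases le_or_gt a 0 with ha' | ha'
            · rcases le_or_gt c 0 with hc' | hc'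
              · have e4 := mul_nonneg hM.le (neg_nonneg.2 hc')
                have e5 := mul_nonneg (neg_nonneg.2 ha') (norm_nonneg x)
                linarith [e4, e5]
              · have hbc : 0 < b * c := mul_pos hb hc'
                have ha'' : a < 0 := by
                  by_contra hcon
                  push_neg at hcon
                  have := mul_nonneg hs0 hcon
                  linarith
                have h1' : b * c < -(s*a) := by linarith
                have h2 := mul_self_lt_mul_self hbc.le h1'
                have e1 : ((K+1)*c)^2 = a^2*c^2 + (b*c)*(b*c) := by
                  have hKb : (K+1)^2 = a^2 + b^2 := by linarith [hb2]
                  rw [mul_pow, hKb]; ring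
                have e2 : (a*‖x‖)^2 = a^2*c^2 + (-(s*a))*(-(s*a)) := by
                  rw [mul_pow, hx2]; ring
                have h3 : ((K+1)*c)^2 < (a*‖x‖)^2 := by rw [e1, e2]; linarith
                have har : 0 < -(a*‖x‖) := by
                  have := mul_pos (neg_pos.2 ha'') hnx
                  linarith
                by_contra hcon
                push_neg at hcon
                have h4 : -(a*‖x‖) < (K+1)*c := by linarith
                have h5 := mul_self_lt_mul_self har.le h4
                linarith [h3, h5]
            · have hc' : c < 0 := by
                by_contra hcon
                push_neg at hcon
                have := mul_nonneg hb.le hcon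
                linarith [mul_pos hs ha']
              have hsa : 0 < s * a := mul_pos hs ha'
              have h1' : s * a < b * (-c) := by linarith
              have h2 := mul_self_lt_mul_self hsa.le h1'
              have e1 : (a*‖x‖)^2 = a^2*c^2 + (s*a)*(s*a) := by
                rw [mul_pow, hx2]; ring
              have e2 : ((K+1)*(-c))^2 = a^2*c^2 + (b*(-c))*(b*(-c)) := by
                have hKb : (K+1)^2 = a^2 + b^2 := by linarith [hb2]
                rw [mul_pow, hKb]; ring
              have h3 : (a*‖x‖)^2 < ((K+1)*(-c))^2 := by rw [e1, e2]; linarith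
              have har : 0 < a*‖x‖ := mul_pos ha' hnx
              have hZ : 0 < (K+1)*(-c) := mul_pos hM (by linarith)
              by_contra hcon
              push_neg at hcon
              have h4 : (K+1)*(-c) < a*‖x‖ := by linarith
              have h5 := mul_self_lt_mul_self hZ.le h4
              linarith [h3, h5]
          have h6 := mul_le_mul_of_nonneg_right key hny.le
          linarith [h6]
        · have h1 : (inner ℝ ((-(K+1)/‖x‖) • x) x : ℝ) = -((K+1) * ‖x‖) := by
            rw [real_inner_smul_left, real_inner_self_eq_norm_sq]
            field_simp
          rw [h1]
          have h2 := (abs_le.1 (habs x)).1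
          linarith [norm_nonneg x]
      · push_neg at hcl
        refine ⟨(a/ny) • y + (-(b/s)) • v, ?_, ?_, ?_⟩
        · have hu2 : ‖(a/ny) • y + (-(b/s)) • v‖^2 = a^2 + b^2 := by
            rw [norm_add_sq_real, real_inner_smul_left, real_inner_smul_right, hyv,
              norm_smul, norm_smul, Real.norm_eq_abs, Real.norm_eq_abs,
              mul_pow, mul_pow, sq_abs, sq_abs, ← hnydef, ← hsdef]
            field_simp
            try ring
          have hu3 : ‖(a/ny) • y + (-(b/s)) • v‖^2 = (K+1)^2 := by
            rw [hu2]; linarith [hb2]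
          by_contra hcon
          push_neg at hcon
          have h5 := mul_self_lt_mul_self hM.le hcon
          linarith [hu3, h5]
        · rw [inner_add_left, real_inner_smul_left, real_inner_smul_left, hvy,
            real_inner_self_eq_norm_sq, ← hnydef]
          have h2 : (a/ny) * ny^2 + (-(b/s)) * 0 = a * ny := by field_simp; ring
          rw [h2, ← hpy]
        · rw [inner_add_left, real_inner_smul_left, real_inner_smul_left, hiyx, hivx]
          have h2 : (a/ny) * (c * ny) + (-(b/s)) * s^2 = a*c - b*s := by field_simp; ring
          rw [h2]
          obtain ⟨l, hldef⟩ : ∃ t : ℝ, t = (b*c + s*a)/(b*ny) := ⟨_, rfl⟩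
          have hl : 0 ≤ l := hldef ▸ div_nonneg hcl (mul_pos hb hny).le
          have hply : p (l • y) = l * (a * ny) := by rw [hscale l hl y, hpy]
          have hl2 : l - c/ny = (s*a)/(b*ny) := by
            rw [hldef]; field_simp; ring
          have hgoal : l • y - x = (l - c/ny) • y - v := by
            rw [hxd, sub_smul]; abel
          have hdist2 : ‖l • y - x‖^2 = (s*a/b)^2 + s^2 := by
            rw [hgoal, norm_sub_sq_real, real_inner_smul_left, hyv, norm_smul,
              Real.norm_eq_abs, mul_pow, sq_abs, hl2, div_pow, ← hnydef, ← hsdef]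
            field_simp
            ring
          have h7 : (s*(K+1))^2 = (s*a)^2 + s^2*b^2 := by
            rw [mul_pow, mul_pow, hb2]; ring
          have hrhs : (0:ℝ) ≤ s*(K+1)/b := by positivity
          have hsq : (s*(K+1)/b)^2 = (s*a/b)^2 + s^2 := by
            rw [div_pow, div_pow]
            field_simp
            linarith [h7]
          have hdistle : ‖l • y - x‖ ≤ s*(K+1)/b := by
            by_contra hcon
            push_neg at hcon
            have h5 := mul_self_lt_mul_self hrhs hcon
            linarith [hdist2, hsq, h5]
          have hd := hdiff (l • y) x
          rw [hply] at hd
          have hKd : K * ‖l • y - x‖ ≤ (K+1) * (s*(K+1)/b) := by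
            apply mul_le_mul (by linarith) hdistle (norm_nonneg _) (by linarith)
          have hd2 : l * (a*ny) - p x ≤ (K+1) * (s*(K+1)/b) := le_trans hd hKd
          have hd3 : (l * (a*ny) - p x) * b ≤ (K+1) * (s*(K+1)) := by
            have h5 := mul_le_mul_of_nonneg_right hd2 hb.le
            calc (l * (a*ny) - p x) * b ≤ (K+1) * (s*(K+1)/b) * b := h5
              _ = (K+1) * (s*(K+1)) := by field_simp
          have hl3 : l * (a*ny) * b = (b*c + s*a) * a := by
            rw [hldef]; field_simp
          by_contra hcon
          push_neg at hcon
          have h8 := mul_lt_mul_of_pos_right hcon hb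
          have h9 : s*b^2 = s*((K+1)^2 - a^2) := by rw [hb2]
          linarith [hd3, hl3, h8, h9]

set_option maxHeartbeats 1000000 in
theorem stmt_13 {n : ℕ} (p : EuclideanSpace ℝ (Fin n) → ℝ) :
    ((∀ (x : EuclideanSpace ℝ (Fin n)) (l : ℝ), 0 < l → p (l • x) = l * p x) ∧
      ∃ K : NNReal, LipschitzWith K p)
    ↔
    ∃ M : ℝ, 0 < M ∧
      ∃ (I S : Type) (_ : Nonempty I) (_ : Nonempty S)
        (a : I → S → EuclideanSpace ℝ (Fin n)),
        (∀ (x : EuclideanSpace ℝ (Fin n)) (s : S),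
          BddBelow (Set.range fun i : I => (inner ℝ (a i s) x : ℝ))) ∧
        (∀ (x : EuclideanSpace ℝ (Fin n)) (i : I),
          BddAbove (Set.range fun s : S => (inner ℝ (a i s) x : ℝ))) ∧
        (∀ x : EuclideanSpace ℝ (Fin n), x ≠ 0 →
          (∀ s : S, -M * ‖x‖ < ⨅ i : I, (inner ℝ (a i s) x : ℝ)) ∧
          (∀ i : I, (⨆ s : S, (inner ℝ (a i s) x : ℝ)) < M * ‖x‖)) ∧
        (∀ x : EuclideanSpace ℝ (Fin n),
          (p x = ⨅ i : I, ⨆ s : S, (inner ℝ (a i s) x : ℝ)) ∧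
          (p x = ⨆ s : S, ⨅ i : I, (inner ℝ (a i s) x : ℝ))) := by
  classical
  constructor
  · rintro ⟨hph, K, hlip⟩
    have hp0 : p 0 = 0 := by
      have h := hph 0 2 (by norm_num)
      rw [smul_zero] at h
      linarith
    have hdiff : ∀ z w, p z - p w ≤ (K:ℝ) * ‖z - w‖ := by
      intro z w
      have h := hlip.dist_le_mul z w
      rw [Real.dist_eq, dist_eq_norm] at h
      linarith [(abs_le.1 h).2]
    have habs : ∀ z, |p z| ≤ (K:ℝ) * ‖z‖ := by
      intro z
      have h1 := hdiff z 0
      have h2 := hdiff 0 z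
      rw [hp0, sub_zero, sub_zero] at h1
      rw [hp0, zero_sub] at h2
      have h3 : ‖(0:EuclideanSpace ℝ (Fin n)) - z‖ = ‖z‖ := by rw [zero_sub, norm_neg]
      rw [h3] at h2
      rw [abs_le]
      constructor <;> linarith
    have hscale : ∀ l : ℝ, 0 ≤ l → ∀ z, p (l • z) = l * p z := by
      intro l hl z
      rcases eq_or_lt_of_le hl with h | h
      · rw [← h, zero_smul, hp0, zero_mul]
      · exact hph z l h
    have hstar := stmt13_star p (K:ℝ) K.coe_nonneg hp0 habs hdiff hscale
    have fstar : {f : EuclideanSpace ℝ (Fin n) → EuclideanSpace ℝ (Fin n) //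
        ∀ y, ‖f y‖ ≤ (K:ℝ) + 1 ∧ p y ≤ inner ℝ (f y) y} :=
      ⟨fun y => (hstar y 0).choose, fun y =>
        ⟨(hstar y 0).choose_spec.1, (hstar y 0).choose_spec.2.1⟩⟩
    refine ⟨(K:ℝ) + 2, by positivity,
      {f : EuclideanSpace ℝ (Fin n) → EuclideanSpace ℝ (Fin n) //
        ∀ y, ‖f y‖ ≤ (K:ℝ) + 1 ∧ p y ≤ inner ℝ (f y) y},
      EuclideanSpace ℝ (Fin n), ⟨fstar⟩, ⟨0⟩, fun f y => f.1 y, ?_, ?_, ?_, ?_⟩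
    all_goals {
      have hbound : ∀ (f : {f : EuclideanSpace ℝ (Fin n) → EuclideanSpace ℝ (Fin n) //
          ∀ y, ‖f y‖ ≤ (K:ℝ) + 1 ∧ p y ≤ inner ℝ (f y) y})
          (y x : EuclideanSpace ℝ (Fin n)),
          |(inner ℝ (f.1 y) x : ℝ)| ≤ ((K:ℝ)+1) * ‖x‖ := by
        intro f y x
        refine le_trans (abs_real_inner_le_norm _ _) ?_
        exact mul_le_mul_of_nonneg_right (f.2 y).1 (norm_nonneg x)
      have hBB : ∀ (x y : EuclideanSpace ℝ (Fin n)),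
          BddBelow (Set.range fun f : {f : EuclideanSpace ℝ (Fin n) → EuclideanSpace ℝ (Fin n) //
            ∀ y, ‖f y‖ ≤ (K:ℝ) + 1 ∧ p y ≤ inner ℝ (f y) y} => (inner ℝ (f.1 y) x : ℝ)) := by
        intro x y
        refine ⟨-(((K:ℝ)+1) * ‖x‖), ?_⟩
        rintro r ⟨f, rfl⟩
        linarith [(abs_le.1 (hbound f y x)).1]
      have hBA : ∀ (x : EuclideanSpace ℝ (Fin n))
          (f : {f : EuclideanSpace ℝ (Fin n) → EuclideanSpace ℝ (Fin n) //
            ∀ y, ‖f y‖ ≤ (K:ℝ) + 1 ∧ p y ≤ inner ℝ (f y) y}),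
          BddAbove (Set.range fun y : EuclideanSpace ℝ (Fin n) => (inner ℝ (f.1 y) x : ℝ)) := by
        intro x f
        refine ⟨((K:ℝ)+1) * ‖x‖, ?_⟩
        rintro r ⟨y, rfl⟩
        linarith [(abs_le.1 (hbound f y x)).2]
      haveI : Nonempty {f : EuclideanSpace ℝ (Fin n) → EuclideanSpace ℝ (Fin n) //
        ∀ y, ‖f y‖ ≤ (K:ℝ) + 1 ∧ p y ≤ inner ℝ (f y) y} := ⟨fstar⟩
      first
      | -- BddBelow goal
        exact fun x s => hBB x s
      | -- BddAbove goal
        exact fun x i => hBA x i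
      | -- strict bounds
        (intro x hx
         have hnx : 0 < ‖x‖ := norm_pos_iff.2 hx
         constructor
         · intro y
           have h1 : -(((K:ℝ)+1) * ‖x‖) ≤ ⨅ f : {f : EuclideanSpace ℝ (Fin n) → EuclideanSpace ℝ (Fin n) //
               ∀ y, ‖f y‖ ≤ (K:ℝ) + 1 ∧ p y ≤ inner ℝ (f y) y}, (inner ℝ (f.1 y) x : ℝ) :=
             le_ciInf fun f => (abs_le.1 (hbound f y x)).1
           have h2 : -((K:ℝ)+2) * ‖x‖ < -(((K:ℝ)+1) * ‖x‖) := by nlinarith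
           exact lt_of_lt_of_le h2 h1
         · intro f
           have h1 : (⨆ y, (inner ℝ (f.1 y) x : ℝ)) ≤ ((K:ℝ)+1) * ‖x‖ :=
             ciSup_le fun y => (abs_le.1 (hbound f y x)).2
           have h2 : ((K:ℝ)+1) * ‖x‖ < ((K:ℝ)+2) * ‖x‖ := by nlinarith
           exact lt_of_le_of_lt h1 h2)
      | -- representations
        (intro x
         have hupd : ∀ y : EuclideanSpace ℝ (Fin n),
             ∃ g : {f : EuclideanSpace ℝ (Fin n) → EuclideanSpace ℝ (Fin n) //
               ∀ y, ‖f y‖ ≤ (K:ℝ) + 1 ∧ p y ≤ inner ℝ (f y) y},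
             (inner ℝ (g.1 y) x : ℝ) ≤ p x := by
           intro y
           obtain ⟨u, hu1, hu2, hu3⟩ := hstar y x
           refine ⟨⟨Function.update fstar.1 y u, ?_⟩, ?_⟩
           · intro z
             by_cases hz : z = y
             · subst hz; rw [Function.update_self]; exact ⟨hu1, hu2⟩
             · rw [Function.update_of_ne hz]; exact fstar.2 z
           · simpa using hu3
         constructor
         · -- p x = ⨅ f, ⨆ y, inner
           apply le_antisymm
           · apply le_ciInf
             intro f
             exact le_trans (f.2 x).2 (le_ciSup (hBA x f) x)
           · have hfull : ∃ g : {f : EuclideanSpace ℝ (Fin n) → EuclideanSpace ℝ (Fin n) //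
                 ∀ y, ‖f y‖ ≤ (K:ℝ) + 1 ∧ p y ≤ inner ℝ (f y) y},
                 ∀ y, (inner ℝ (g.1 y) x : ℝ) ≤ p x := by
               refine ⟨⟨fun y => (hstar y x).choose, fun y =>
                 ⟨(hstar y x).choose_spec.1, (hstar y x).choose_spec.2.1⟩⟩, fun y =>
                 (hstar y x).choose_spec.2.2⟩
             obtain ⟨g, hg⟩ := hfull
             have h2 : (⨆ y, (inner ℝ (g.1 y) x : ℝ)) ≤ p x := ciSup_le hg
             have hbb2 : BddBelow (Set.range fun f : {f : EuclideanSpace ℝ (Fin n) → EuclideanSpace ℝ (Fin n) //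
                 ∀ y, ‖f y‖ ≤ (K:ℝ) + 1 ∧ p y ≤ inner ℝ (f y) y} =>
                 ⨆ y, (inner ℝ (f.1 y) x : ℝ)) := by
               refine ⟨p x, ?_⟩
               rintro r ⟨f, rfl⟩
               exact le_trans (f.2 x).2 (le_ciSup (hBA x f) x)
             exact le_trans (ciInf_le hbb2 g) h2
         · -- p x = ⨆ y, ⨅ f, inner
           have hinfle : ∀ y, (⨅ f : {f : EuclideanSpace ℝ (Fin n) → EuclideanSpace ℝ (Fin n) //
               ∀ y, ‖f y‖ ≤ (K:ℝ) + 1 ∧ p y ≤ inner ℝ (f y) y}, (inner ℝ (f.1 y) x : ℝ)) ≤ p x := by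
             intro y
             obtain ⟨g, hg⟩ := hupd y
             exact le_trans (ciInf_le (hBB x y) g) hg
           apply le_antisymm
           · have h1 : p x ≤ ⨅ f : {f : EuclideanSpace ℝ (Fin n) → EuclideanSpace ℝ (Fin n) //
                 ∀ y, ‖f y‖ ≤ (K:ℝ) + 1 ∧ p y ≤ inner ℝ (f y) y}, (inner ℝ (f.1 x) x : ℝ) :=
               le_ciInf fun f => (f.2 x).2
             have hba2 : BddAbove (Set.range fun y : EuclideanSpace ℝ (Fin n) =>
                 ⨅ f : {f : EuclideanSpace ℝ (Fin n) → EuclideanSpace ℝ (Fin n) //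
                   ∀ y, ‖f y‖ ≤ (K:ℝ) + 1 ∧ p y ≤ inner ℝ (f y) y}, (inner ℝ (f.1 y) x : ℝ)) := by
               refine ⟨p x, ?_⟩
               rintro r ⟨y, rfl⟩
               exact hinfle y
             exact le_trans h1 (le_ciSup hba2 x)
           · exact ciSup_le hinfle)
    }
  · rintro ⟨M, hM, I, S, hI, hS, a, hBB, hBA, hstrict, hrep⟩
    have hnorm : ∀ i s, ‖a i s‖ ≤ M := by
      intro i s
      by_cases h : a i s = 0
      · rw [h, norm_zero]; exact hM.le
      · have hx := hstrict (a i s) h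
        have h1 : (inner ℝ (a i s) (a i s) : ℝ) ≤ ⨆ s', (inner ℝ (a i s') (a i s) : ℝ) :=
          le_ciSup (hBA (a i s) i) s
        have h3 : ‖a i s‖ * ‖a i s‖ < M * ‖a i s‖ := by
          have h4 := lt_of_le_of_lt h1 (hx.2 i)
          rw [real_inner_self_eq_norm_sq] at h4
          nlinarith [h4]
        exact (lt_of_mul_lt_mul_right h3 (norm_nonneg _)).le
    have hib : ∀ (i : I) (s : S) (x : EuclideanSpace ℝ (Fin n)),
        |(inner ℝ (a i s) x : ℝ)| ≤ M * ‖x‖ := by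
      intro i s x
      refine le_trans (abs_real_inner_le_norm _ _) ?_
      exact mul_le_mul_of_nonneg_right (hnorm i s) (norm_nonneg x)
    constructor
    · intro x l hl
      rw [(hrep (l • x)).1, (hrep x).1, Real.mul_iInf_of_nonneg hl.le]
      refine iInf_congr fun i => ?_
      rw [Real.mul_iSup_of_nonneg hl.le]
      refine iSup_congr fun s => ?_
      rw [real_inner_smul_right]
    · have key : ∀ z w, p z - p w ≤ M * ‖z - w‖ := by
        intro z w
        have h1 : ∀ i, (⨆ s, (inner ℝ (a i s) z : ℝ)) ≤ (⨆ s, (inner ℝ (a i s) w : ℝ)) + M * ‖z - w‖ := by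
          intro i
          apply ciSup_le
          intro s
          have h2 : (inner ℝ (a i s) z : ℝ) = inner ℝ (a i s) w + inner ℝ (a i s) (z - w) := by
            rw [inner_sub_right]; ring
          have h3 : (inner ℝ (a i s) (z - w) : ℝ) ≤ M * ‖z - w‖ :=
            le_trans (le_abs_self _) (hib i s (z - w))
          have h4 := le_ciSup (hBA w i) s
          linarith
        have h5 : p z - M * ‖z - w‖ ≤ p w := by
          rw [(hrep w).1]
          apply le_ciInf
          intro i
          have h6 : p z ≤ ⨆ s, (inner ℝ (a i s) z : ℝ) := by
            rw [(hrep z).1]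
            refine ciInf_le ⟨-(M * ‖z‖), ?_⟩ i
            rintro r ⟨i', rfl⟩
            have h7 := le_ciSup (hBA z i') (Classical.arbitrary S)
            have h8 := (abs_le.1 (hib i' (Classical.arbitrary S) z)).1
            linarith
          linarith [h1 i]
        linarith
      refine ⟨⟨M, hM.le⟩, LipschitzWith.of_dist_le_mul fun z w => ?_⟩
      rw [Real.dist_eq, dist_eq_norm]
      have h9 := key z w
      have h10 := key w z
      rw [norm_sub_rev w z] at h10
      have : |p z - p w| ≤ M * ‖z - w‖ := abs_le.2 ⟨by linarith, h9⟩
      exact this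
end

section
/- A function p : ℝⁿ → ℝ is difference sublinear (i.e. a difference of two real-valued sublinear functions) if and only if there exist two bounded families of vectors {b_s : s∈S} and {c_i : i∈I} in ℝⁿ such that, with a_{is} := b_s − c_i, one has p(x) = inf_{i∈I} sup_{s∈S} ⟨a_{is},x⟩ = sup_{s∈S} inf_{i∈I} ⟨a_{is},x⟩ for all x ∈ ℝⁿ. -/
open Set Bornology Metric

local notation "⟪" x ", " y "⟫" => @inner ℝ _ _ x y

private lemma hlp_ciSup_sub {ι : Type*} [Nonempty ι] (f : ι → ℝ)
    (h : BddAbove (Set.range f)) (a : ℝ) : (⨆ i, f i) - a = ⨆ i, (f i - a) :=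
  Monotone.map_ciSup_of_continuousAt ((continuous_sub_right a).continuousAt)
    (fun _ _ huv => sub_le_sub_right huv a) h

private lemma hlp_sub_ciSup {ι : Type*} [Nonempty ι] (f : ι → ℝ)
    (h : BddAbove (Set.range f)) (a : ℝ) : a - (⨆ i, f i) = ⨅ i, (a - f i) :=
  Antitone.map_ciSup_of_continuousAt ((continuous_const.sub continuous_id).continuousAt)
    (fun _ _ huv => sub_le_sub_left huv a) h

section E
variable {n : ℕ}

private lemma hlp_bddAbove_inner {S : Type*} (b : S → EuclideanSpace ℝ (Fin n))
    (hb : IsBounded (Set.range b)) (x : EuclideanSpace ℝ (Fin n)) :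
    BddAbove (Set.range fun s => ⟪b s, x⟫) := by
  obtain ⟨M, hM⟩ := hb.exists_norm_le
  refine ⟨M * ‖x‖, ?_⟩
  rintro _ ⟨s, rfl⟩
  calc ⟪b s, x⟫ ≤ ‖b s‖ * ‖x‖ := real_inner_le_norm _ _
    _ ≤ M * ‖x‖ := by
        have := hM (b s) (Set.mem_range_self s)
        nlinarith [norm_nonneg x]

variable {φ : EuclideanSpace ℝ (Fin n) → ℝ}
  (hh : ∀ (x : EuclideanSpace ℝ (Fin n)) (l : ℝ), 0 < l → φ (l • x) = l * φ x)
  (hc : ConvexOn ℝ Set.univ φ)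

include hh in
private lemma hlp_zero : φ 0 = 0 := by
  have := hh 0 2 two_pos
  rw [smul_zero] at this
  linarith

include hh hc in
private lemma hlp_add (x y : EuclideanSpace ℝ (Fin n)) : φ (x + y) ≤ φ x + φ y := by
  have h2 := hc.2 (Set.mem_univ x) (Set.mem_univ y)
    (by norm_num : (0:ℝ) ≤ 1/2) (by norm_num : (0:ℝ) ≤ 1/2) (by norm_num)
  have he : (1/2 : ℝ) • x + (1/2 : ℝ) • y = (1/2 : ℝ) • (x + y) := by
    rw [smul_add]
  rw [he, hh (x + y) (1/2) (by norm_num)] at h2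
  simp only [smul_eq_mul] at h2
  linarith

include hh hc in
private lemma hlp_bound : ∃ C : ℝ, 0 ≤ C ∧ ∀ x, φ x ≤ C * ‖x‖ := by
  have hcont : Continuous φ := by
    exact continuousOn_univ.mp (hc.continuousOn isOpen_univ)
  obtain ⟨C0, hC0⟩ := ((isCompact_sphere (0 : EuclideanSpace ℝ (Fin n)) 1).image
    hcont).bddAbove
  refine ⟨max C0 0, le_max_right _ _, fun x => ?_⟩
  rcases eq_or_ne x 0 with rfl | hx
  · rw [hlp_zero hh, norm_zero, mul_zero]
  · have hnx : 0 < ‖x‖ := norm_pos_iff.mpr hx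
    set u : EuclideanSpace ℝ (Fin n) := ‖x‖⁻¹ • x with hu
    have hun : u ∈ sphere (0 : EuclideanSpace ℝ (Fin n)) 1 := by
      rw [mem_sphere_zero_iff_norm, hu, norm_smul, norm_inv, norm_norm,
        inv_mul_cancel₀ hnx.ne']
    have h1 : φ u ≤ C0 := hC0 ⟨u, hun, rfl⟩
    have h2 : φ x = ‖x‖ * φ u := by
      rw [← hh u ‖x‖ hnx, hu, smul_inv_smul₀ hnx.ne']
    rw [h2]
    calc ‖x‖ * φ u ≤ ‖x‖ * C0 := by nlinarith
      _ ≤ ‖x‖ * max C0 0 := by nlinarith [le_max_left C0 (0:ℝ)]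
      _ = max C0 0 * ‖x‖ := mul_comm _ _

include hh hc in
private lemma hlp_support (x₀ : EuclideanSpace ℝ (Fin n)) :
    ∃ v : EuclideanSpace ℝ (Fin n), (∀ x, ⟪v, x⟫ ≤ φ x) ∧ ⟪v, x₀⟫ = φ x₀ := by
  have N_hom : ∀ c : ℝ, 0 < c → ∀ x, φ (c • x) = c * φ x := fun c hcp x => hh x c hcp
  have N_add := hlp_add hh hc
  have h0 := hlp_zero hh
  have key : ∃ g : EuclideanSpace ℝ (Fin n) →ₗ[ℝ] ℝ, (∀ x, g x ≤ φ x) ∧ g x₀ = φ x₀ := by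
    rcases eq_or_ne x₀ 0 with rfl | hx₀
    · obtain ⟨g, hg1, hg2⟩ := exists_extension_of_le_sublinear
        ((0 : EuclideanSpace ℝ (Fin n) →ₗ[ℝ] ℝ).toPMap ⊥) φ N_hom N_add
        (by
          rintro ⟨x, hx⟩
          have hx0 : x = 0 := (Submodule.mem_bot ℝ).mp hx
          simp [LinearMap.toPMap, hx0, h0])
      exact ⟨g, hg2, by rw [map_zero, h0]⟩
    · have Hc : ∀ c : ℝ, c • x₀ = 0 → c • φ x₀ = 0 := fun c hc =>
        (smul_eq_zero.1 hc).elim (fun hc' => by rw [hc', zero_smul]) fun hx' => absurd hx' hx₀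
      set f := LinearPMap.mkSpanSingleton' (σ := RingHom.id ℝ) x₀ (φ x₀) Hc with hf
      have hneg : -φ x₀ ≤ φ (-x₀) := by
        have := N_add x₀ (-x₀)
        rw [add_neg_cancel, h0] at this
        linarith
      have hfle : ∀ x : f.domain, f x ≤ φ x := by
        rintro ⟨x, hx⟩
        obtain ⟨t, rfl⟩ := Submodule.mem_span_singleton.mp hx
        have happ : f ⟨t • x₀, hx⟩ = t • φ x₀ :=
          LinearPMap.mkSpanSingleton'_apply x₀ (φ x₀) Hc t hx
        rw [smul_eq_mul] at happ
        rw [happ]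
        rcases lt_trichotomy t 0 with ht | ht | ht
        · have : φ (t • x₀) = (-t) * φ (-x₀) := by
            rw [← hh (-x₀) (-t) (by linarith)]
            congr 1
            simp [neg_smul, smul_neg]
          rw [this]
          nlinarith
        · simp [ht, h0]
        · rw [hh x₀ t ht]
      obtain ⟨g, hg1, hg2⟩ := exists_extension_of_le_sublinear f φ N_hom N_add hfle
      refine ⟨g, hg2, ?_⟩
      have := hg1 ⟨x₀, Submodule.mem_span_singleton_self x₀⟩
      rw [this]
      exact LinearPMap.mkSpanSingleton'_apply_self x₀ (φ x₀) Hc _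
  obtain ⟨g, hg1, hg2⟩ := key
  refine ⟨(InnerProductSpace.toDual ℝ (EuclideanSpace ℝ (Fin n))).symm
    (LinearMap.toContinuousLinearMap g), ?_, ?_⟩
  · intro x
    rw [InnerProductSpace.toDual_symm_apply]
    exact (LinearMap.coe_toContinuousLinearMap' g ▸ hg1 x : _)
  · rw [InnerProductSpace.toDual_symm_apply]
    exact (LinearMap.coe_toContinuousLinearMap' g ▸ hg2 : _)

include hh hc in
private lemma hlp_repr :
    ∃ (S : Type) (_ : Nonempty S) (b : S → EuclideanSpace ℝ (Fin n)),
      IsBounded (Set.range b) ∧ ∀ x, φ x = ⨆ s, ⟪b s, x⟫ := by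
  obtain ⟨C, hC0, hC⟩ := hlp_bound hh hc
  obtain ⟨v0, hv0, -⟩ := hlp_support hh hc 0
  haveI hne : Nonempty {v : EuclideanSpace ℝ (Fin n) // ∀ x, ⟪v, x⟫ ≤ φ x} := ⟨⟨v0, hv0⟩⟩
  refine ⟨{v : EuclideanSpace ℝ (Fin n) // ∀ x, ⟪v, x⟫ ≤ φ x}, hne, Subtype.val, ?_, ?_⟩
  · apply (isBounded_closedBall (x := (0 : EuclideanSpace ℝ (Fin n))) (r := C)).subset
    rintro _ ⟨⟨v, hv⟩, rfl⟩
    rw [mem_closedBall, dist_zero_right]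
    have h1 : ‖v‖ ^ 2 ≤ C * ‖v‖ := by
      calc ‖v‖ ^ 2 = ⟪v, v⟫ := (real_inner_self_eq_norm_sq v).symm
        _ ≤ φ v := hv v
        _ ≤ C * ‖v‖ := hC v
    rcases eq_or_lt_of_le (norm_nonneg v) with h | h
    · rw [← h]; exact hC0
    · nlinarith
  · intro x
    have hbdd : BddAbove (Set.range fun s : {v : EuclideanSpace ℝ (Fin n) //
        ∀ x, ⟪v, x⟫ ≤ φ x} => ⟪s.1, x⟫) := by
      refine ⟨φ x, ?_⟩
      rintro _ ⟨s, rfl⟩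
      exact s.2 x
    obtain ⟨v, hv1, hv2⟩ := hlp_support hh hc x
    refine le_antisymm ?_ (ciSup_le fun s => s.2 x)
    calc φ x = ⟪v, x⟫ := hv2.symm
      _ ≤ _ := le_ciSup hbdd (⟨v, hv1⟩ : {v : EuclideanSpace ℝ (Fin n) // ∀ x, ⟪v, x⟫ ≤ φ x})

end E

theorem stmt_15 {n : ℕ} (p : EuclideanSpace ℝ (Fin n) → ℝ) :
    (∃ φ₁ φ₂ : EuclideanSpace ℝ (Fin n) → ℝ,
      (∀ (x : EuclideanSpace ℝ (Fin n)) (l : ℝ), 0 < l → φ₁ (l • x) = l * φ₁ x) ∧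
      ConvexOn ℝ Set.univ φ₁ ∧
      (∀ (x : EuclideanSpace ℝ (Fin n)) (l : ℝ), 0 < l → φ₂ (l • x) = l * φ₂ x) ∧
      ConvexOn ℝ Set.univ φ₂ ∧
      (∀ x, p x = φ₁ x - φ₂ x))
    ↔
    ∃ (I S : Type) (_ : Nonempty I) (_ : Nonempty S)
      (b : S → EuclideanSpace ℝ (Fin n)) (c : I → EuclideanSpace ℝ (Fin n)),
      Bornology.IsBounded (Set.range b) ∧ Bornology.IsBounded (Set.range c) ∧
      (∀ x : EuclideanSpace ℝ (Fin n),
        (p x = ⨅ i : I, ⨆ s : S, (inner ℝ (b s - c i) x : ℝ)) ∧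
        (p x = ⨆ s : S, ⨅ i : I, (inner ℝ (b s - c i) x : ℝ))) := by
  constructor
  · rintro ⟨φ₁, φ₂, hh1, hc1, hh2, hc2, hp⟩
    obtain ⟨S, hS, b, hb, hrb⟩ := hlp_repr hh1 hc1
    obtain ⟨I, hI, c, hcb, hrc⟩ := hlp_repr hh2 hc2
    refine ⟨I, S, hI, hS, b, c, hb, hcb, fun x => ?_⟩
    have hbA := hlp_bddAbove_inner b hb x
    have hcA := hlp_bddAbove_inner c hcb x
    have hinner : ∀ (s : S) (i : I), (⟪b s - c i, x⟫ : ℝ) = ⟪b s, x⟫ - ⟪c i, x⟫ :=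
      fun s i => inner_sub_left _ _ _
    constructor
    · have h1 : ∀ i : I, (⨆ s : S, (⟪b s - c i, x⟫ : ℝ)) = φ₁ x - ⟪c i, x⟫ := by
        intro i
        rw [show (fun s : S => (⟪b s - c i, x⟫ : ℝ)) = fun s => ⟪b s, x⟫ - ⟪c i, x⟫ from
          funext fun s => hinner s i, ← hlp_ciSup_sub _ hbA, ← hrb x]
      rw [iInf_congr h1, ← hlp_sub_ciSup _ hcA, ← hrc x, hp x]
    · have h1 : ∀ s : S, (⨅ i : I, (⟪b s - c i, x⟫ : ℝ)) = ⟪b s, x⟫ - φ₂ x := by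
        intro s
        rw [show (fun i : I => (⟪b s - c i, x⟫ : ℝ)) = fun i => ⟪b s, x⟫ - ⟪c i, x⟫ from
          funext fun i => hinner s i, ← hlp_sub_ciSup _ hcA, ← hrc x]
      rw [iSup_congr h1, ← hlp_ciSup_sub _ hbA, ← hrb x, hp x]
  · rintro ⟨I, S, hI, hS, b, c, hb, hcb, hp⟩
    refine ⟨fun x => ⨆ s, ⟪b s, x⟫, fun x => ⨆ i, ⟪c i, x⟫, ?_, ?_, ?_, ?_, ?_⟩
    · intro x l hl
      show (⨆ s, (⟪b s, l • x⟫ : ℝ)) = l * ⨆ s, ⟪b s, x⟫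
      have : (fun s : S => (⟪b s, l • x⟫ : ℝ)) = fun s => l * ⟪b s, x⟫ :=
        funext fun s => real_inner_smul_right _ _ _
      rw [this, ← Real.mul_iSup_of_nonneg hl.le]
    · refine ⟨convex_univ, fun x _ y _ a a' ha ha' hab => ?_⟩
      refine ciSup_le fun s => ?_
      have : (⟪b s, a • x + a' • y⟫ : ℝ) = a * ⟪b s, x⟫ + a' * ⟪b s, y⟫ := by
        rw [inner_add_right, real_inner_smul_right, real_inner_smul_right]
      rw [this]
      simp only [smul_eq_mul]
      gcongr
      · exact le_ciSup (hlp_bddAbove_inner b hb x) s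
      · exact le_ciSup (hlp_bddAbove_inner b hb y) s
    · intro x l hl
      show (⨆ i, (⟪c i, l • x⟫ : ℝ)) = l * ⨆ i, ⟪c i, x⟫
      have : (fun i : I => (⟪c i, l • x⟫ : ℝ)) = fun i => l * ⟪c i, x⟫ :=
        funext fun i => real_inner_smul_right _ _ _
      rw [this, ← Real.mul_iSup_of_nonneg hl.le]
    · refine ⟨convex_univ, fun x _ y _ a a' ha ha' hab => ?_⟩
      refine ciSup_le fun i => ?_
      have : (⟪c i, a • x + a' • y⟫ : ℝ) = a * ⟪c i, x⟫ + a' * ⟪c i, y⟫ := by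
        rw [inner_add_right, real_inner_smul_right, real_inner_smul_right]
      rw [this]
      simp only [smul_eq_mul]
      gcongr
      · exact le_ciSup (hlp_bddAbove_inner c hcb x) i
      · exact le_ciSup (hlp_bddAbove_inner c hcb y) i
    · intro x
      show p x = (⨆ s, (⟪b s, x⟫ : ℝ)) - ⨆ i, ⟪c i, x⟫
      have hcA := hlp_bddAbove_inner c hcb x
      have h1 : ∀ s : S, (⨅ i : I, (⟪b s - c i, x⟫ : ℝ)) = ⟪b s, x⟫ - ⨆ i, ⟪c i, x⟫ := by
        intro s
        rw [show (fun i : I => (⟪b s - c i, x⟫ : ℝ)) = fun i => ⟪b s, x⟫ - ⟪c i, x⟫ from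
          funext fun i => inner_sub_left _ _ _, ← hlp_sub_ciSup _ hcA]
      rw [(hp x).2, iSup_congr h1, ← hlp_ciSup_sub _ (hlp_bddAbove_inner b hb x)]
end

section
/- If I and S are nonempty finite index sets and {a_{is} ∈ ℝⁿ : i∈I, s∈S} satisfies p(x) = min_{i∈I} max_{s∈S} ⟨a_{is},x⟩ = max_{s∈S} min_{i∈I} ⟨a_{is},x⟩ for all x ∈ ℝⁿ, then p is continuous, positively homogeneous, and piecewise linear: there is a finite covering of ℝⁿ by convex cones on each of which p coincides with a linear function. -/
open Finset

theorem stmt_17 {n : ℕ} {I S : Type} [Fintype I] [Fintype S] [Nonempty I] [Nonempty S]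
    (a : I → S → EuclideanSpace ℝ (Fin n)) (p : EuclideanSpace ℝ (Fin n) → ℝ)
    (hrep : ∀ x : EuclideanSpace ℝ (Fin n),
      (p x = ⨅ i : I, ⨆ s : S, (inner ℝ (a i s) x : ℝ)) ∧
      (p x = ⨆ s : S, ⨅ i : I, (inner ℝ (a i s) x : ℝ))) :
    Continuous p ∧
    (∀ (x : EuclideanSpace ℝ (Fin n)) (l : ℝ), 0 < l → p (l • x) = l * p x) ∧
    ∃ (m : ℕ) (K : Fin m → Set (EuclideanSpace ℝ (Fin n))),
      (∀ j, Convex ℝ (K j)) ∧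
      (∀ j, ∀ x ∈ K j, ∀ l : ℝ, 0 < l → l • x ∈ K j) ∧
      (⋃ j, K j) = Set.univ ∧
      (∀ j, ∃ aj : EuclideanSpace ℝ (Fin n), ∀ x ∈ K j, p x = (inner ℝ aj x : ℝ)) := by
  have hIne : (Finset.univ : Finset I).Nonempty := univ_nonempty
  have hSne : (Finset.univ : Finset S).Nonempty := univ_nonempty
  -- rewrite p as finite inf of finite sup
  have hp : ∀ x, p x = (Finset.univ : Finset I).inf' hIne
      (fun i => (Finset.univ : Finset S).sup' hSne (fun s => (inner ℝ (a i s) x : ℝ))) := by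
    intro x
    rw [(hrep x).1, ← Finset.inf'_univ_eq_ciInf]
    congr 1; funext i
    rw [← Finset.sup'_univ_eq_ciSup]
  have hq : ∀ x, p x = (Finset.univ : Finset S).sup' hSne
      (fun s => (Finset.univ : Finset I).inf' hIne (fun i => (inner ℝ (a i s) x : ℝ))) := by
    intro x
    rw [(hrep x).2, ← Finset.sup'_univ_eq_ciSup]
    congr 1; funext s
    rw [← Finset.inf'_univ_eq_ciInf]
  have hpfun : p = fun x => (Finset.univ : Finset I).inf' hIne
      (fun i => (Finset.univ : Finset S).sup' hSne (fun s => (inner ℝ (a i s) x : ℝ))) :=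
    funext hp
  refine ⟨?_, ?_, ?_⟩
  · -- continuity
    rw [hpfun]
    apply Continuous.finset_inf'_apply hIne
    intro i _
    apply Continuous.finset_sup'_apply hSne
    intro s _
    exact (innerSL ℝ (a i s)).continuous
  · -- positive homogeneity
    intro x l hl
    have hmi : ∀ (f : I → ℝ), l * Finset.univ.inf' hIne f
        = Finset.univ.inf' hIne (fun i => l * f i) := fun f => by
      have h := map_finset_inf' (OrderIso.mulLeft₀ l hl) hIne f
      simp only [OrderIso.mulLeft₀, Equiv.mulLeft₀, Equiv.coe_fn_mk,
        Function.comp] at h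
      exact h
    have hms : ∀ (f : S → ℝ), l * Finset.univ.sup' hSne f
        = Finset.univ.sup' hSne (fun s => l * f s) := fun f => by
      have h := map_finset_sup' (OrderIso.mulLeft₀ l hl) hSne f
      simp only [OrderIso.mulLeft₀, Equiv.mulLeft₀, Equiv.coe_fn_mk,
        Function.comp] at h
      exact h
    rw [hp, hp, hmi]
    congr 1; funext i
    rw [hms]
    congr 1; funext s
    exact real_inner_smul_right _ _ _
  · -- piecewise linearity
    refine ⟨Fintype.card (I × S), fun j =>
      {x | (∀ i', (inner ℝ (a ((Fintype.equivFin (I × S)).symm j).1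
              ((Fintype.equivFin (I × S)).symm j).2) x : ℝ) ≤
            inner ℝ (a i' ((Fintype.equivFin (I × S)).symm j).2) x) ∧
          (∀ s', (inner ℝ (a ((Fintype.equivFin (I × S)).symm j).1 s') x : ℝ) ≤
            inner ℝ (a ((Fintype.equivFin (I × S)).symm j).1
              ((Fintype.equivFin (I × S)).symm j).2) x)}, ?_, ?_, ?_, ?_⟩
    · -- convexity
      intro j
      set i := ((Fintype.equivFin (I × S)).symm j).1
      set s := ((Fintype.equivFin (I × S)).symm j).2
      rintro x ⟨hx1, hx2⟩ y ⟨hy1, hy2⟩ c d hc hd hcd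
      constructor
      · intro i'
        simp only [inner_add_right, real_inner_smul_right]
        exact add_le_add (by nlinarith [hx1 i']) (by nlinarith [hy1 i'])
      · intro s'
        simp only [inner_add_right, real_inner_smul_right]
        exact add_le_add (by nlinarith [hx2 s']) (by nlinarith [hy2 s'])
    · -- cone
      rintro j x ⟨hx1, hx2⟩ l hl
      constructor
      · intro i'
        simp only [real_inner_smul_right]
        nlinarith [hx1 i']
      · intro s'
        simp only [real_inner_smul_right]
        nlinarith [hx2 s']
    · -- covering
      apply Set.eq_univ_of_forall
      intro x
      -- choose i* minimizing sup, s* maximizing inf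
      obtain ⟨i0, -, hi0⟩ := Finset.exists_mem_eq_inf' hIne
        (fun i => (Finset.univ : Finset S).sup' hSne (fun s => (inner ℝ (a i s) x : ℝ)))
      obtain ⟨s0, -, hs0⟩ := Finset.exists_mem_eq_sup' hSne
        (fun s => (Finset.univ : Finset I).inf' hIne (fun i => (inner ℝ (a i s) x : ℝ)))
      have h1 : p x = (Finset.univ : Finset S).sup' hSne
          (fun s => (inner ℝ (a i0 s) x : ℝ)) := by rw [hp x, hi0]
      have h2 : p x = (Finset.univ : Finset I).inf' hIne
          (fun i => (inner ℝ (a i s0) x : ℝ)) := by rw [hq x, hs0]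
      have hle1 : p x ≤ (inner ℝ (a i0 s0) x : ℝ) := by
        rw [h2]; exact Finset.inf'_le _ (mem_univ i0)
      have hle2 : (inner ℝ (a i0 s0) x : ℝ) ≤ p x := by
        rw [h1]; exact Finset.le_sup' (fun s => (inner ℝ (a i0 s) x : ℝ)) (mem_univ s0)
      have heq : (inner ℝ (a i0 s0) x : ℝ) = p x := le_antisymm hle2 hle1
      refine Set.mem_iUnion.2 ⟨Fintype.equivFin (I × S) (i0, s0), ?_⟩
      simp only [Set.mem_setOf_eq, Equiv.symm_apply_apply]
      constructor
      · intro i'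
        rw [heq, h2]
        exact Finset.inf'_le _ (mem_univ i')
      · intro s'
        rw [heq, h1]
        exact Finset.le_sup' (fun s => (inner ℝ (a i0 s) x : ℝ)) (mem_univ s')
    · -- linear on each piece
      intro j
      set i := ((Fintype.equivFin (I × S)).symm j).1
      set s := ((Fintype.equivFin (I × S)).symm j).2
      refine ⟨a i s, ?_⟩
      rintro x ⟨hx1, hx2⟩
      have hle1 : p x ≤ (inner ℝ (a i s) x : ℝ) := by
        rw [hp x]
        refine le_trans (Finset.inf'_le _ (mem_univ i)) ?_
        exact Finset.sup'_le _ _ fun s' _ => hx2 s'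
      have hle2 : (inner ℝ (a i s) x : ℝ) ≤ p x := by
        rw [hq x]
        refine le_trans ?_
          (Finset.le_sup' (fun s => Finset.univ.inf' hIne fun i' => (inner ℝ (a i' s) x : ℝ))
            (mem_univ s))
        exact Finset.le_inf' _ _ fun i' _ => hx1 i'
      exact le_antisymm hle1 hle2
end

section
/- Every difference of two polyhedral sublinear functions, p(x) = max_{s∈S} ⟨b_s,x⟩ − max_{i∈I} ⟨c_i,x⟩ with S and I finite and nonempty, admits the saddle representation p(x) = min_{i∈I} max_{s∈S} ⟨b_s − c_i, x⟩ = max_{s∈S} min_{i∈I} ⟨b_s − c_i, x⟩ for all x ∈ ℝⁿ. -/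
private lemma mysup_sub {ι : Type*} [Fintype ι] [Nonempty ι] (f : ι → ℝ) (a : ℝ) :
    (⨆ i, (f i - a)) = (⨆ i, f i) - a := by
  obtain ⟨i0, h⟩ := Finite.exists_max f
  have h1 : (⨆ i, f i) = f i0 :=
    le_antisymm (ciSup_le h) (le_ciSup (Set.Finite.bddAbove (Set.finite_range f)) i0)
  have h2 : (⨆ i, (f i - a)) = f i0 - a :=
    le_antisymm (ciSup_le fun i => sub_le_sub_right (h i) a)
      (le_ciSup (f := fun i => f i - a) (Set.Finite.bddAbove (Set.finite_range _)) i0)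
  rw [h1, h2]

private lemma mysub_sup {ι : Type*} [Fintype ι] [Nonempty ι] (f : ι → ℝ) (a : ℝ) :
    (⨅ i, (a - f i)) = a - (⨆ i, f i) := by
  obtain ⟨i0, h⟩ := Finite.exists_max f
  have h1 : (⨆ i, f i) = f i0 :=
    le_antisymm (ciSup_le h) (le_ciSup (Set.Finite.bddAbove (Set.finite_range f)) i0)
  have h2 : (⨅ i, (a - f i)) = a - f i0 :=
    le_antisymm (ciInf_le (f := fun i => a - f i) (Set.Finite.bddBelow (Set.finite_range _)) i0)
      (le_ciInf fun i => sub_le_sub_left (h i) a)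
  rw [h1, h2]

theorem stmt_18 {n : ℕ} {I S : Type} [Fintype I] [Fintype S] [Nonempty I] [Nonempty S]
    (b : S → EuclideanSpace ℝ (Fin n)) (c : I → EuclideanSpace ℝ (Fin n))
    (p : EuclideanSpace ℝ (Fin n) → ℝ)
    (hp : ∀ x : EuclideanSpace ℝ (Fin n),
      p x = (⨆ s : S, (inner ℝ (b s) x : ℝ)) - ⨆ i : I, (inner ℝ (c i) x : ℝ)) :
    ∀ x : EuclideanSpace ℝ (Fin n),
      (p x = ⨅ i : I, ⨆ s : S, (inner ℝ (b s - c i) x : ℝ)) ∧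
      (p x = ⨆ s : S, ⨅ i : I, (inner ℝ (b s - c i) x : ℝ)) := by
  intro x
  simp only [inner_sub_left]
  constructor
  · rw [hp x]
    have : ∀ i : I, (⨆ s : S, ((inner ℝ (b s) x : ℝ) - inner ℝ (c i) x)) =
        (⨆ s : S, (inner ℝ (b s) x : ℝ)) - inner ℝ (c i) x :=
      fun i => mysup_sub _ _
    simp only [this]
    rw [mysub_sup]
  · rw [hp x]
    have : ∀ s : S, (⨅ i : I, ((inner ℝ (b s) x : ℝ) - inner ℝ (c i) x)) =
        (inner ℝ (b s) x : ℝ) - ⨆ i : I, (inner ℝ (c i) x : ℝ) :=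
      fun s => mysub_sup _ _
    simp only [this]
    rw [mysup_sub]
end
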